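/- arXiv:1402.4037 — 7 statements merged into one kernel-verified Lean document; each statement's English description precedes it below -/
import Mathlib

section
/- Let Ĝ = (V,Ê) be a finite connected simple graph, let T ⊆ V × V be any set of vertex pairs, and let {a,b} be a non-edge of Ĝ such that {a,b} ∉ S_{u,v}(Ĝ) for every (u,v) ∈ T. Let Ĝ' be the graph obtained from Ĝ by adding the edge {a,b}. Then the distance in Ĝ' between u and v equals δ̂(u,v) for every (u,v) ∈ T. -/
open SimpleGraph

private lemma key_walk_bound {V : Type*} [Fintype V] [DecidableEq V]
    (Ghat : SimpleGraph V) (hc : Ghat.Connected) (a b : V)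
    {u v : V} (W : (Ghat ⊔ SimpleGraph.fromEdgeSet {s(a, b)}).Walk u v) :
    min (Ghat.dist u v)
      (min (Ghat.dist u a + Ghat.dist b v + 1) (Ghat.dist u b + Ghat.dist a v + 1))
      ≤ W.length := by
  induction W with
  | nil => simp [SimpleGraph.dist_self]
  | @cons u w v h W ih =>
    rw [SimpleGraph.Walk.length_cons]
    rcases h with h | h
    · -- Ghat edge from u to w
      have hd : Ghat.dist u w ≤ 1 := by
        rw [SimpleGraph.dist_eq_one_iff_adj.mpr h]
      have t1 := hc.dist_triangle (u := u) (v := w) (w := v)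
      have t2 := hc.dist_triangle (u := u) (v := w) (w := a)
      have t3 := hc.dist_triangle (u := u) (v := w) (w := b)
      omega
    · -- the new edge
      have hmem : s(u, w) = s(a, b) := by simpa using h.1
      rw [Sym2.eq_iff] at hmem
      rcases hmem with ⟨rfl, rfl⟩ | ⟨rfl, rfl⟩
      · simp only [SimpleGraph.dist_self] at ih ⊢
        omega
      · simp only [SimpleGraph.dist_self] at ih ⊢
        omega

theorem stmt_1 {V : Type*} [Fintype V] [DecidableEq V]
    (Ghat : SimpleGraph V) (hGhat : Ghat.Connected)
    (T : Set (V × V)) (a b : V) (hab : a ≠ b) (hnedge : ¬ Ghat.Adj a b)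
    (hT : ∀ p ∈ T,
      ¬ (Ghat.dist p.1 a + Ghat.dist b p.2 + 1 < Ghat.dist p.1 p.2) ∧
      ¬ (Ghat.dist p.1 b + Ghat.dist a p.2 + 1 < Ghat.dist p.1 p.2)) :
    ∀ p ∈ T,
      (Ghat ⊔ SimpleGraph.fromEdgeSet {s(a, b)}).dist p.1 p.2 = Ghat.dist p.1 p.2 := by
  intro p hp
  obtain ⟨h1, h2⟩ := hT p hp
  set G' := Ghat ⊔ SimpleGraph.fromEdgeSet {s(a, b)} with hG'
  apply le_antisymm
  · -- G'.dist ≤ Ghat.dist : map a shortest walk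
    obtain ⟨W, hW⟩ := (hGhat p.1 p.2).exists_walk_length_eq_dist
    calc G'.dist p.1 p.2 ≤ (W.mapLe le_sup_left).length := SimpleGraph.dist_le _
      _ = Ghat.dist p.1 p.2 := by simpa using hW
  · -- Ghat.dist ≤ G'.dist
    have hr : G'.Reachable p.1 p.2 := (hGhat p.1 p.2).mono le_sup_left
    obtain ⟨W, hW⟩ := hr.exists_walk_length_eq_dist
    have := key_walk_bound Ghat hGhat a b W
    rw [hW] at this
    omega
end

section
/- Let G = (V,E) be a finite connected simple graph, let U ⊆ V, and let A ⊆ V be nonempty. Then for every edge {u,v} of G with u,v ∈ U, there exists a ∈ A such that both u ∈ D_a and v ∈ D_a; that is, the subgraphs G[D_a] for a ∈ A together cover every edge of the induced subgraph G[U]. -/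
open SimpleGraph

/-- Distance from a set of vertices: `δ(A, v) = min_{a ∈ A} δ(a, v)`. -/
noncomputable def setDist {V : Type*} (G : SimpleGraph V) (A : Set V) (v : V) : ℕ :=
  sInf {d | ∃ a ∈ A, G.dist a v = d}

/-- Voronoi-type cell: `C_A(w) = {v : δ(w,v) < δ(A,v)}`. -/
noncomputable def cell {V : Type*} (G : SimpleGraph V) (A : Set V) (w : V) : Set V :=
  {v | G.dist w v < setDist G A v}

/-- `N₂(a) = {u : δ(u,a) ≤ 2}`. -/
noncomputable def ball2 {V : Type*} (G : SimpleGraph V) (a : V) : Set V :=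
  {u | G.dist u a ≤ 2}

/-- Extended Voronoi cell `D_a = ((⋃ {C_A(b) : b ∈ N₂(a)}) ∪ N₂(a)) ∩ U`. -/
noncomputable def extCell {V : Type*} (G : SimpleGraph V) (A : Set V) (U : Set V) (a : V) :
    Set V :=
  ((⋃ b ∈ ball2 G a, cell G A b) ∪ ball2 G a) ∩ U

private lemma myLengthDrop {V : Type*} {G : SimpleGraph V} {u v : V} (p : G.Walk u v) (n : ℕ) :
    (p.drop n).length = p.length - n := by
  induction p generalizing n with
  | nil => simp [SimpleGraph.Walk.drop]
  | cons h q ih =>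
    cases n with
    | zero => simp [SimpleGraph.Walk.drop]
    | succ n => simp [SimpleGraph.Walk.drop, ih]

private lemma setDist_attained {V : Type*} (G : SimpleGraph V) (A : Set V) (hA : A.Nonempty)
    (v : V) : ∃ a ∈ A, G.dist a v = setDist G A v := by
  have hne : {d | ∃ a ∈ A, G.dist a v = d}.Nonempty := by
    obtain ⟨a, ha⟩ := hA
    exact ⟨G.dist a v, a, ha, rfl⟩
  exact Nat.sInf_mem hne

private lemma key {V : Type*} (G : SimpleGraph V) (hG : G.Connected)
    (U : Set V) (A : Set V) (hA : A.Nonempty) (u v : V) (huv : G.Adj u v)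
    (hu : u ∈ U) (hv : v ∈ U) (hle : setDist G A u ≤ setDist G A v) :
    ∃ a ∈ A, u ∈ extCell G A U a ∧ v ∈ extCell G A U a := by
  obtain ⟨a, haA, hd⟩ := setDist_attained G A hA u
  set d := G.dist a u with hdd
  have hduv : G.dist u v ≤ 1 := G.dist_le (SimpleGraph.Walk.cons huv SimpleGraph.Walk.nil)
  refine ⟨a, haA, ?_⟩
  by_cases h2 : d ≤ 1
  · -- both u and v are in N₂(a)
    have hc : G.dist u a = G.dist a u := SimpleGraph.dist_comm
    have hu2 : u ∈ ball2 G a := by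
      simp only [ball2, Set.mem_setOf_eq]
      omega
    have hv2 : v ∈ ball2 G a := by
      simp only [ball2, Set.mem_setOf_eq]
      have := hG.dist_triangle (u := v) (v := u) (w := a)
      have hcv : G.dist v u = G.dist u v := SimpleGraph.dist_comm
      omega
    exact ⟨⟨Or.inr hu2, hu⟩, ⟨Or.inr hv2, hv⟩⟩
  · push_neg at h2
    have hdne : d ≠ 0 := by omega
    obtain ⟨p, hp⟩ := hG.exists_walk_length_eq_dist a u
    set b := p.getVert 2 with hb
    have hlen : 2 ≤ p.length := by omega
    -- dist a b ≤ 2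
    have hab : G.dist a b ≤ 2 := by
      have h01 : G.Adj a (p.getVert 1) := by
        have := p.adj_getVert_succ (i := 0) (by omega)
        simpa using this
      have h12 : G.Adj (p.getVert 1) (p.getVert 2) := p.adj_getVert_succ (i := 1) (by omega)
      have t1 : G.dist a (p.getVert 1) ≤ 1 :=
        G.dist_le (SimpleGraph.Walk.cons h01 SimpleGraph.Walk.nil)
      have t2 : G.dist (p.getVert 1) b ≤ 1 :=
        G.dist_le (SimpleGraph.Walk.cons h12 SimpleGraph.Walk.nil)
      have := hG.dist_triangle (u := a) (v := p.getVert 1) (w := b)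
      omega
    -- dist b u ≤ d - 2
    have hbu : G.dist b u ≤ d - 2 := by
      have := G.dist_le (p.drop 2)
      rw [myLengthDrop, hp] at this
      exact this
    have hbv : G.dist b v ≤ d - 1 := by
      have := hG.dist_triangle (u := b) (v := u) (w := v)
      omega
    have hbball : b ∈ ball2 G a := by
      simp only [ball2, Set.mem_setOf_eq]
      have : G.dist b a = G.dist a b := SimpleGraph.dist_comm
      omega
    have hucell : u ∈ cell G A b := by
      simp only [cell, Set.mem_setOf_eq, hd]
      omega
    have hvcell : v ∈ cell G A b := by
      simp only [cell, Set.mem_setOf_eq]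
      omega
    have hmem : ∀ x, x ∈ cell G A b → x ∈ ⋃ c ∈ ball2 G a, cell G A c := fun x hx =>
      Set.mem_biUnion hbball hx
    exact ⟨⟨Or.inl (hmem u hucell), hu⟩, ⟨Or.inl (hmem v hvcell), hv⟩⟩

theorem stmt_3 {V : Type*} [Fintype V] (G : SimpleGraph V) (hG : G.Connected)
    (U : Set V) (A : Set V) (hA : A.Nonempty) :
    ∀ u v : V, G.Adj u v → u ∈ U → v ∈ U →
      ∃ a ∈ A, u ∈ extCell G A U a ∧ v ∈ extCell G A U a := by
  intro u v huv hu hv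
  rcases le_total (setDist G A u) (setDist G A v) with h | h
  · exact key G hG U A hA u v huv hu hv h
  · obtain ⟨a, haA, h1, h2⟩ := key G hG U A hA v u huv.symm hv hu h
    exact ⟨a, haA, h2, h1⟩
end

section
/- Let G = (V,E) and Ĝ = (V,Ê) be finite connected simple graphs on the same vertex set with Ê ⊆ E, let U ⊆ V, and let A ⊆ V be nonempty. If δ(u,v) = δ̂(u,v) for every pair (u,v) with u ∈ ⋃_{a∈A} N̂₂(a) and v ∈ U, then D_a = D̂_a for every a ∈ A. -/
open SimpleGraph

/-- One step along a shortest walk. -/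
lemma step_aux {V : Type*} {G : SimpleGraph V} (hG : G.Connected) {a v : V}
    (h : 1 ≤ G.dist a v) : ∃ b, G.Adj a b ∧ G.dist b v = G.dist a v - 1 := by
  obtain ⟨p, hp⟩ := exists_walk_of_dist_ne_zero (u := a) (v := v) (G := G) (by omega)
  cases p with
  | nil => simp at hp; rw [SimpleGraph.dist_self] at h; omega
  | @cons _ b _ hadj q =>
    refine ⟨b, hadj, ?_⟩
    have h1 : G.dist b v ≤ q.length := dist_le q
    have hab : G.dist a b = 1 := dist_eq_one_iff_adj.mpr hadj
    have h2 : G.dist a v ≤ G.dist a b + G.dist b v := hG.dist_triangle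
    simp only [Walk.length_cons] at hp
    omega

/-- Two steps along shortest walks. -/
lemma step2_aux {V : Type*} {G : SimpleGraph V} (hG : G.Connected) {a v : V}
    (h : 2 ≤ G.dist a v) : ∃ b, G.dist a b ≤ 2 ∧ G.dist b v = G.dist a v - 2 := by
  obtain ⟨b1, hadj1, hb1⟩ := step_aux hG (a := a) (v := v) (by omega)
  obtain ⟨b2, hadj2, hb2⟩ := step_aux hG (a := b1) (v := v) (by omega)
  refine ⟨b2, ?_, by omega⟩
  have h1 : G.dist a b1 = 1 := dist_eq_one_iff_adj.mpr hadj1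
  have h2 : G.dist b1 b2 = 1 := dist_eq_one_iff_adj.mpr hadj2
  have h3 : G.dist a b2 ≤ G.dist a b1 + G.dist b1 b2 := hG.dist_triangle
  omega

theorem stmt_4 {V : Type*} [Fintype V]
    (G Ghat : SimpleGraph V) (hG : G.Connected) (hGhat : Ghat.Connected)
    (hsub : Ghat ≤ G) (U : Set V) (A : Set V) (hA : A.Nonempty)
    (hdist : ∀ u v : V, u ∈ ⋃ a ∈ A, ball2 Ghat a → v ∈ U →
      G.dist u v = Ghat.dist u v) :
    ∀ a ∈ A, extCell G A U a = extCell Ghat A U a := by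
  -- monotonicity of distances
  have hmono : ∀ u v : V, G.dist u v ≤ Ghat.dist u v := fun u v =>
    (hGhat.preconnected u v).dist_anti hsub
  -- membership in the union
  have hmem : ∀ a ∈ A, ∀ u : V, Ghat.dist u a ≤ 2 → u ∈ ⋃ a ∈ A, ball2 Ghat a := by
    intro a ha u hu
    exact Set.mem_iUnion₂.mpr ⟨a, ha, hu⟩
  -- distances from A-vertices agree on U
  have hAd : ∀ a ∈ A, ∀ v ∈ U, G.dist a v = Ghat.dist a v := by
    intro a ha v hv
    exact hdist a v (hmem a ha a (by simp [SimpleGraph.dist_self])) hv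
  -- set distances agree on U
  have hset : ∀ v ∈ U, setDist G A v = setDist Ghat A v := by
    intro v hv
    unfold setDist
    congr 1
    ext d
    constructor
    · rintro ⟨a, ha, rfl⟩; exact ⟨a, ha, (hAd a ha v hv).symm⟩
    · rintro ⟨a, ha, rfl⟩; exact ⟨a, ha, hAd a ha v hv⟩
  intro a ha
  ext v
  simp only [extCell, Set.mem_inter_iff, Set.mem_union, Set.mem_iUnion]
  constructor
  · rintro ⟨hL, hv⟩
    refine ⟨?_, hv⟩
    have havd : G.dist a v = Ghat.dist a v := hAd a ha v hv
    rcases hL with ⟨b, hb, hvb⟩ | hball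
    · -- v ∈ cell G A b, b ∈ ball2 G a
      have hb2 : G.dist b a ≤ 2 := hb
      have hbv : G.dist b v < setDist G A v := hvb
      by_cases hle : Ghat.dist a v ≤ 2
      · exact Or.inr (by simpa [ball2, SimpleGraph.dist_comm] using hle)
      · push_neg at hle
        obtain ⟨c, hc1, hc2⟩ := step2_aux hGhat (a := a) (v := v) (by omega)
        refine Or.inl ⟨c, ?_, ?_⟩
        · simpa [ball2, SimpleGraph.dist_comm] using hc1
        · -- v ∈ cell Ghat A c
          have htri : G.dist a v ≤ G.dist a b + G.dist b v := hG.dist_triangle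
          have hab : G.dist a b ≤ 2 := by rwa [SimpleGraph.dist_comm]
          have : Ghat.dist c v < setDist Ghat A v := by
            rw [← hset v hv]
            omega
          exact this
    · -- v ∈ ball2 G a : G.dist v a ≤ 2
      have : Ghat.dist v a ≤ 2 := by
        have := hball
        simp only [ball2, Set.mem_setOf_eq] at this
        rw [SimpleGraph.dist_comm] at this ⊢
        omega
      exact Or.inr this
  · rintro ⟨hL, hv⟩
    refine ⟨?_, hv⟩
    rcases hL with ⟨b, hb, hvb⟩ | hball
    · have hb2 : Ghat.dist b a ≤ 2 := hb
      have hbv : Ghat.dist b v < setDist Ghat A v := hvb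
      refine Or.inl ⟨b, ?_, ?_⟩
      · exact le_trans (hmono b a) hb2
      · have heq : G.dist b v = Ghat.dist b v := hdist b v (hmem a ha b hb2) hv
        have : G.dist b v < setDist G A v := by rw [heq, hset v hv]; exact hbv
        exact this
    · exact Or.inr (le_trans (hmono v a) hball)
end

section
/- There is a universal constant c > 0 with the following property. For every finite connected simple graph G = (V,E) on n ≥ 2 vertices with maximum degree Δ and treewidth tw, there exists a set T ⊆ V × V of vertex pairs with |T| ≤ c·Δ·(Δ + tw·log n)·n·log n such that every non-edge {a,b} of G belongs to S_{u,v}(G) for some (u,v) ∈ T. -/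
open SimpleGraph

/-- A tree decomposition of a graph `G`: a tree `T` on nodes `ι` with a bag for each node,
such that for every vertex the nodes whose bags contain it form a nonempty connected
subtree, and every edge of `G` is contained in some bag. -/
structure TreeDecomp {V : Type u} (G : SimpleGraph V) (ι : Type v) where
  tree : SimpleGraph ι
  isTree : tree.IsTree
  bag : ι → Set V
  bag_conn : ∀ v : V, (tree.induce {i | v ∈ bag i}).Connected
  bag_edge : ∀ ⦃u v : V⦄, G.Adj u v → ∃ i, u ∈ bag i ∧ v ∈ bag i

/-- `G` has a tree decomposition of width at most `k`. -/
def HasTreewidthAtMost {V : Type u} (G : SimpleGraph V) (k : ℕ) : Prop :=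
  ∃ (ι : Type) (_ : Fintype ι) (D : TreeDecomp G ι), ∀ i : ι, (D.bag i).ncard ≤ k + 1

/-- The treewidth of `G`: the minimum width over all tree decompositions. -/
noncomputable def treewidth {V : Type u} (G : SimpleGraph V) : ℕ :=
  sInf {k | HasTreewidthAtMost G k}

namespace Stmt6Aux

/-! ### Tree machinery: sides of an edge, balancing node -/

section Tree

variable {ι : Type}

/-- The `j`-side of the edge `{c,j}` in `T`: nodes that can reach `j` avoiding that edge. -/
def side (T : SimpleGraph ι) (c j : ι) : Set ι := {t | (T.deleteEdges {s(c,j)}).Reachable t j}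

lemma walk_del (T : SimpleGraph ι) (e : Sym2 ι) {t j : ι} (p : T.Walk t j) :
    (T.deleteEdges {e}).Reachable t j ∨ ∃ x ∈ e, (T.deleteEdges {e}).Reachable t x := by
  induction p with
  | nil => exact Or.inl (Reachable.refl _)
  | cons h q ih =>
    rename_i t u j'
    by_cases he : s(t,u) = e
    · exact Or.inr ⟨t, by rw [← he]; exact Sym2.mem_mk_left _ _, Reachable.refl _⟩
    · have hadj : (T.deleteEdges {e}).Adj t u := by
        rw [deleteEdges_adj]
        exact ⟨h, by simpa using he⟩
      rcases ih with h1 | ⟨x, hx, h1⟩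
      · exact Or.inl (hadj.reachable.trans h1)
      · exact Or.inr ⟨x, hx, hadj.reachable.trans h1⟩

lemma not_reach_del (T : SimpleGraph ι) (hT : T.IsTree) {c j : ι} (h : T.Adj c j) :
    ¬ (T.deleteEdges {s(c,j)}).Reachable c j := by
  have hb : T.IsBridge s(c,j) :=
    (isAcyclic_iff_forall_edge_isBridge.mp hT.2) (by simpa using h)
  rw [isBridge_iff] at hb
  intro hr
  apply hb
  exact hr

lemma side_disjoint (T : SimpleGraph ι) (hT : T.IsTree) {c j : ι} (h : T.Adj c j) :
    Disjoint (side T c j) (side T j c) := by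
  rw [Set.disjoint_left]
  intro t h1 h2
  apply not_reach_del T hT h
  rw [side] at h1 h2
  rw [Sym2.eq_swap] at h2
  exact h2.symm.trans h1

/-- Weight of a set of nodes with respect to a node-weighting `μ`. -/
noncomputable def wt [Fintype ι] (μ : ι → ℕ) (X : Set ι) : ℕ := ∑ t : ι, X.indicator μ t

lemma wt_add_le [Fintype ι] (μ : ι → ℕ) {X Y : Set ι} (h : Disjoint X Y) :
    wt μ X + wt μ Y ≤ ∑ t : ι, μ t := by
  classical
  rw [wt, wt, ← Finset.sum_add_distrib]
  apply Finset.sum_le_sum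
  intro t _
  by_cases hx : t ∈ X
  · have hy : t ∉ Y := fun hy => Set.disjoint_left.mp h hx hy
    simp [Set.indicator_of_mem hx, Set.indicator_of_notMem hy]
  · by_cases hy : t ∈ Y <;>
      simp [Set.indicator_of_notMem hx, hy, Set.indicator_of_mem, Set.indicator_of_notMem]

lemma wt_mono [Fintype ι] (μ : ι → ℕ) {X Y : Set ι} (h : X ⊆ Y) : wt μ X ≤ wt μ Y := by
  apply Finset.sum_le_sum
  intro t _
  exact Set.indicator_le_indicator_of_subset h (fun _ => Nat.zero_le _) t

/-- In a finite tree there is a node all of whose branches have weight at most half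
the total weight. -/
lemma exists_sink [Fintype ι] (T : SimpleGraph ι) (hT : T.IsTree) (μ : ι → ℕ) :
    ∃ c : ι, ∀ j : ι, T.Adj c j → 2 * wt μ (side T c j) ≤ ∑ t : ι, μ t := by
  classical
  by_contra hcon
  push_neg at hcon
  choose f hadj hw using hcon
  have hinj : Function.Injective (fun c => (⟨s(c, f c), mem_edgeFinset.mpr (hadj c)⟩ :
      {e // e ∈ T.edgeFinset})) := by
    intro c c' hcc
    simp only [Subtype.mk_eq_mk, Sym2.eq_iff] at hcc
    rcases hcc with ⟨rfl, _⟩ | ⟨h1, hffc⟩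
    · rfl
    · subst h1
      exfalso
      have hd := side_disjoint T hT (hadj c')
      have hle := wt_add_le μ hd
      have h1 := hw c'
      have h2 := hw (f c')
      rw [hffc] at h2
      omega
  have hcard := Fintype.card_le_of_injective _ hinj
  rw [Fintype.card_coe] at hcard
  have hedge := hT.card_edgeFinset
  omega

/-- `T` with all edges at `c` removed. -/
def delv (T : SimpleGraph ι) (c : ι) : SimpleGraph ι := T.deleteEdges {e : Sym2 ι | c ∈ e}

lemma delv_reach_side {T : SimpleGraph ι} {c j t t' : ι}
    (h : (delv T c).Reachable t t') (h' : t' ∈ side T c j) : t ∈ side T c j := by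
  have hle : delv T c ≤ T.deleteEdges {s(c,j)} := by
    apply deleteEdges_anti
    intro e he
    simp only [Set.mem_singleton_iff] at he
    subst he
    exact Sym2.mem_mk_left c j
  exact (h.mono hle).trans h'

/-- A walk whose support avoids `c` gives a `delv`-walk. -/
lemma reach_delv_of_walk {T : SimpleGraph ι} {c x y : ι} (p : T.Walk x y)
    (h : ∀ z ∈ p.support, z ≠ c) : (delv T c).Reachable x y := by
  refine ⟨p.toDeleteEdges _ ?_⟩
  intro e he
  simp only [Set.mem_setOf_eq]
  intro hce
  induction e with
  | h a b =>
    rw [Sym2.mem_iff] at hce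
    rcases hce with rfl | rfl
    · exact h _ (p.fst_mem_support_of_mem_edges he) rfl
    · exact h _ (p.snd_mem_support_of_mem_edges he) rfl

/-- Every node `t ≠ c` of a tree reaches some neighbor `j` of `c` while avoiding `c`. -/
lemma exists_dir {T : SimpleGraph ι} (hT : T.IsTree) {c t : ι} (ht : t ≠ c) :
    ∃ j, T.Adj c j ∧ (delv T c).Reachable t j := by
  classical
  obtain ⟨q0⟩ := hT.1 c t
  set q : T.Walk c t := (q0.toPath : T.Path c t).1 with hq
  have hqp : q.IsPath := q0.toPath.2
  have hnil : ¬ q.Nil := by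
    intro hn
    rw [SimpleGraph.Walk.nil_iff_length_eq] at hn
    have h0 := q.getVert_of_length_le (i := 0) (le_of_eq hn)
    rw [q.getVert_zero] at h0
    exact ht h0.symm
  have hadj : T.Adj c (q.getVert 1) := q.adj_snd hnil
  refine ⟨q.getVert 1, hadj, ?_⟩
  have htail : q.tail.support = q.support.tail := q.support_tail_of_not_nil hnil
  have hc_not : c ∉ q.tail.support := by
    rw [htail]
    have hnd : q.support.Nodup := hqp.2
    have hcons := q.support_eq_cons
    rw [hcons] at hnd
    exact (List.nodup_cons.mp hnd).1
  have hr : (delv T c).Reachable (q.getVert 1) t := by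
    apply reach_delv_of_walk q.tail
    intro z hz hzc
    exact hc_not (hzc ▸ hz)
  exact hr.symm

lemma reach_of_induce_walk {T : SimpleGraph ι} {s : Set ι} :
    ∀ {a b : ↥s} (_ : (T.induce s).Walk a b), ∃ q : T.Walk a.1 b.1, ∀ z ∈ q.support, z ∈ s := by
  intro a b w
  induction w with
  | nil =>
    exact ⟨SimpleGraph.Walk.nil, by rename_i a'; intro z hz; simp at hz; subst hz; exact a'.2⟩
  | cons h w ih =>
    rename_i a' u' b'
    obtain ⟨q, hq⟩ := ih
    have hadj : T.Adj a'.1 u'.1 := h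
    refine ⟨SimpleGraph.Walk.cons hadj q, ?_⟩
    intro z hz
    rw [SimpleGraph.Walk.support_cons, List.mem_cons] at hz
    rcases hz with rfl | hz
    · exact a'.2
    · exact hq z hz

lemma supp_reach {T : SimpleGraph ι} {s : Set ι} (hconn : (T.induce s).Connected)
    {c : ι} (hc : c ∉ s) {t t' : ι} (ht : t ∈ s) (ht' : t' ∈ s) :
    (delv T c).Reachable t t' := by
  obtain ⟨w⟩ := hconn ⟨t, ht⟩ ⟨t', ht'⟩
  obtain ⟨q, hq⟩ := reach_of_induce_walk w
  exact reach_delv_of_walk q (fun z hz hzc => hc (hzc ▸ hq z hz))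

end Tree

/-! ### Counting helpers -/

lemma prod_ncard {α β : Type} (s : Set α) (t : Set β) : (s ×ˢ t).ncard = s.ncard * t.ncard := by
  rw [← Nat.card_coe_set_eq, ← Nat.card_coe_set_eq, ← Nat.card_coe_set_eq,
    ← Nat.card_prod]
  exact Nat.card_congr (Equiv.Set.prod s t)

lemma filter_card_eq_wt {α ι : Type} [Fintype ι] [DecidableEq ι] (s : Finset α) (f : α → ι)
    (Y : Set ι) [DecidablePred (· ∈ Y)] :
    (s.filter (fun v => f v ∈ Y)).card
      = wt (fun i => (s.filter (fun v => f v = i)).card) Y := by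
  classical
  rw [wt]
  rw [show (∑ t : ι, Y.indicator (fun i => (s.filter (fun v => f v = i)).card) t)
      = ∑ t ∈ Finset.univ.filter (· ∈ Y), (s.filter (fun v => f v = t)).card from
    Finset.sum_indicator_eq_sum_filter Finset.univ
      (fun _ k => (s.filter (fun v => f v = k)).card) (fun _ => Y) id]
  rw [Finset.card_eq_sum_card_fiberwise
    (f := f) (t := Finset.univ.filter (· ∈ Y))
    (fun x hx => by simp only [Finset.mem_coe, Finset.mem_filter] at hx ⊢; exact ⟨Finset.mem_univ _, hx.2⟩)]
  apply Finset.sum_congr rfl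
  intro t ht
  simp only [Finset.mem_filter] at ht
  congr 1
  ext v
  simp only [Finset.mem_filter]
  constructor
  · rintro ⟨⟨hv, _⟩, h2⟩; exact ⟨hv, h2⟩
  · rintro ⟨hv, h2⟩; exact ⟨⟨hv, h2 ▸ ht.2⟩, h2⟩

lemma sum_fiber_card {α ι : Type} [Fintype ι] [DecidableEq ι] (s : Finset α) (f : α → ι) :
    ∑ t : ι, (s.filter (fun v => f v = t)).card = s.card := by
  rw [Finset.card_eq_sum_card_fiberwise (f := f) (t := Finset.univ)
    (fun x _ => Finset.mem_univ _)]

lemma ncard_biUnion_le {α β : Type} (s : Finset α) (g : α → Set β) [Finite β] :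
    (⋃ a ∈ s, g a).ncard ≤ ∑ a ∈ s, (g a).ncard := by
  classical
  induction s using Finset.induction with
  | empty => simp
  | insert _ _ h ih =>
    rename_i a s'
    rw [Finset.sum_insert h,
      show (⋃ x ∈ insert a s', g x) = g a ∪ ⋃ x ∈ s', g x by simp]
    exact le_trans (Set.ncard_union_le _ _) (Nat.add_le_add_left ih _)

/-! ### Geodesic walks -/

section Geo

variable {V : Type} {G : SimpleGraph V}

lemma dist_getVert_le (hG : G.Connected) {a b : V} (p : G.Walk a b) (k : ℕ) :
    G.dist a (p.getVert k) ≤ k := by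
  induction k with
  | zero => simp [p.getVert_zero, SimpleGraph.dist_self]
  | succ k ih =>
    by_cases hk : k < p.length
    · have hadj : G.Adj (p.getVert k) (p.getVert (k+1)) := p.adj_getVert_succ hk
      calc G.dist a (p.getVert (k+1))
          ≤ G.dist a (p.getVert k) + G.dist (p.getVert k) (p.getVert (k+1)) := by
            exact hG.dist_triangle
        _ ≤ k + 1 := by
            have h1 : G.dist (p.getVert k) (p.getVert (k+1)) ≤ 1 :=
              SimpleGraph.dist_le (SimpleGraph.Walk.cons hadj SimpleGraph.Walk.nil)
            omega
    · push_neg at hk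
      rw [p.getVert_of_length_le (le_trans hk (Nat.le_succ k))]
      have := SimpleGraph.dist_le p
      omega

lemma geodesic_getVert (hG : G.Connected) {a b : V} (p : G.Walk a b)
    (hp : p.length = G.dist a b) {k : ℕ} (hk : k ≤ p.length) :
    G.dist a (p.getVert k) = k ∧ G.dist (p.getVert k) b = p.length - k := by
  have h1 : G.dist a (p.getVert k) ≤ k := dist_getVert_le hG p k
  have h2 : G.dist (p.getVert k) b ≤ p.length - k := by
    have := dist_getVert_le hG p.reverse (p.length - k)
    rw [p.getVert_reverse] at this
    have hkk : p.length - (p.length - k) = k := by omega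
    rw [hkk] at this
    rw [SimpleGraph.dist_comm]
    simpa using this
  have h3 : G.dist a b ≤ G.dist a (p.getVert k) + G.dist (p.getVert k) b :=
    hG.dist_triangle
  omega

end Geo

/-! ### The recursive covering construction -/

section Main

variable {V : Type} [Fintype V] {G : SimpleGraph V} [DecidableRel G.Adj]
  {ι : Type} [Fintype ι]

theorem rec_cover (hG : G.Connected) (D : TreeDecomp G ι) (tw Δ : ℕ)
    (hbag : ∀ i, (D.bag i).ncard ≤ tw + 1) (hΔ : G.maxDegree = Δ)
    (τ : V → ι) (hτ : ∀ v, v ∈ D.bag (τ v)) :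
    ∀ (n : ℕ) (R : Set V), R.ncard ≤ n →
    ∃ Tset : Set (V × V),
      Tset.ncard ≤ 2*(tw+1)*(Δ+1) * R.ncard * (Nat.log 2 R.ncard + 1) ∧
      ∀ a b : V, a ≠ b → ¬ G.Adj a b →
        (∃ p : G.Walk a b, p.length = G.dist a b ∧ ∀ z ∈ p.support, z ∈ R) →
        ∃ q ∈ Tset, G.dist q.1 a + G.dist b q.2 + 1 < G.dist q.1 q.2 ∨
                    G.dist q.1 b + G.dist a q.2 + 1 < G.dist q.1 q.2 := by
  intro n
  induction n using Nat.strong_induction_on with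
  | _ n IH =>
  intro R hR
  classical
  set K := (tw+1)*(Δ+1) with hK
  -- weights
  set Rfin : Finset V := R.toFinite.toFinset with hRfin
  have hRfin_card : Rfin.card = R.ncard := (Set.ncard_eq_toFinset_card R R.toFinite).symm
  set μ : ι → ℕ := fun i => (Rfin.filter (fun v => τ v = i)).card with hμ
  obtain ⟨c, hc⟩ := exists_sink D.tree D.isTree μ
  have hμsum : ∑ t : ι, μ t = R.ncard := by
    have h := sum_fiber_card Rfin τ
    rw [hRfin_card] at h
    simpa [hμ] using h
  -- separator
  set S : Set V := D.bag c ∩ R with hS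
  set NS : Set V := S ∪ {v | ∃ s ∈ S, G.Adj s v} with hNS
  have hSsub : S ⊆ R := Set.inter_subset_right
  have hNScard : NS.ncard ≤ K := by
    have hsub : NS ⊆ ⋃ s ∈ S.toFinite.toFinset, ({s} ∪ G.neighborSet s) := by
      intro v hv
      rcases hv with hv | ⟨s, hs, hadj⟩
      · exact Set.mem_biUnion (S.toFinite.mem_toFinset.mpr hv) (Or.inl rfl)
      · exact Set.mem_biUnion (S.toFinite.mem_toFinset.mpr hs) (Or.inr hadj)
    calc NS.ncard ≤ (⋃ s ∈ S.toFinite.toFinset, ({s} ∪ G.neighborSet s)).ncard :=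
          Set.ncard_le_ncard hsub (Set.toFinite _)
      _ ≤ ∑ s ∈ S.toFinite.toFinset, ({s} ∪ G.neighborSet s : Set V).ncard :=
          ncard_biUnion_le _ _
      _ ≤ ∑ _s ∈ S.toFinite.toFinset, (Δ+1) := by
          apply Finset.sum_le_sum
          intro s _
          calc ({s} ∪ G.neighborSet s : Set V).ncard
              ≤ ({s} : Set V).ncard + (G.neighborSet s).ncard := Set.ncard_union_le _ _
            _ ≤ 1 + Δ := by
                have h1 : ({s} : Set V).ncard = 1 := Set.ncard_singleton s
                have h2 : (G.neighborSet s).ncard = G.degree s := by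
                  rw [← Nat.card_coe_set_eq, Nat.card_eq_fintype_card]
                  exact G.card_neighborSet_eq_degree s
                have h3 : G.degree s ≤ Δ := hΔ ▸ G.degree_le_maxDegree s
                omega
            _ = Δ + 1 := by omega
      _ = S.toFinite.toFinset.card * (Δ+1) := by rw [Finset.sum_const, smul_eq_mul]
      _ ≤ (tw+1) * (Δ+1) := by
          apply Nat.mul_le_mul_right
          rw [← Set.ncard_eq_toFinset_card S S.toFinite]
          calc S.ncard ≤ (D.bag c).ncard := Set.ncard_inter_le_ncard_left _ _ (Set.toFinite _)
            _ ≤ tw + 1 := hbag c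
  -- base pairs
  set P0 : Set (V × V) := (NS ×ˢ R) ∪ (R ×ˢ NS) with hP0
  have hP0card : P0.ncard ≤ 2 * K * R.ncard := by
    calc P0.ncard ≤ (NS ×ˢ R).ncard + (R ×ˢ NS).ncard := Set.ncard_union_le _ _
      _ = NS.ncard * R.ncard + R.ncard * NS.ncard := by rw [prod_ncard, prod_ncard]
      _ ≤ K * R.ncard + R.ncard * K :=
          Nat.add_le_add (Nat.mul_le_mul_right _ hNScard) (Nat.mul_le_mul_left _ hNScard)
      _ = 2 * K * R.ncard := by ring
  -- components
  set X : Set V := R \ S with hX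
  set Comp : V → Set V := fun a => {v | ∃ p : G.Walk v a, ∀ z ∈ p.support, z ∈ X} with hComp
  have comp_sub : ∀ a, Comp a ⊆ X := by
    rintro a v ⟨p, hp⟩
    exact hp v p.start_mem_support
  have comp_self : ∀ a ∈ X, a ∈ Comp a := by
    intro a ha
    refine ⟨SimpleGraph.Walk.nil, ?_⟩
    intro z hz
    simp only [SimpleGraph.Walk.support_nil, List.mem_singleton] at hz
    exact hz ▸ ha
  have comp_eq : ∀ a v, v ∈ Comp a → Comp v = Comp a := by
    intro a v ⟨pva, hpva⟩
    ext u
    constructor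
    · rintro ⟨puv, hpuv⟩
      refine ⟨puv.append pva, ?_⟩
      intro z hz
      rw [SimpleGraph.Walk.support_append, List.mem_append] at hz
      rcases hz with hz | hz
      · exact hpuv z hz
      · exact hpva z (List.mem_of_mem_tail hz)
    · rintro ⟨pua, hpua⟩
      refine ⟨pua.append pva.reverse, ?_⟩
      intro z hz
      rw [SimpleGraph.Walk.support_append, List.mem_append] at hz
      rcases hz with hz | hz
      · exact hpua z hz
      · rw [SimpleGraph.Walk.support_reverse] at hz
        exact hpva z (List.mem_reverse.mp (List.mem_of_mem_tail hz))
  -- supports of component vertices avoid c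
  have hbagc : ∀ v ∈ X, v ∉ D.bag c := by
    intro v hv hvc
    exact hv.2 ⟨hvc, hv.1⟩
  -- balance
  have hbal : ∀ a ∈ X, 2 * (Comp a).ncard ≤ R.ncard := by
    intro a ha
    have hτa : τ a ≠ c := fun h => hbagc a ha (h ▸ hτ a)
    obtain ⟨j, hcj, hreach⟩ := exists_dir D.isTree hτa
    -- all supports of vertices of components reach the start's bag node avoiding c
    have key : ∀ (a0 u : V) (p : G.Walk u a0), (∀ z ∈ p.support, z ∈ X) →
        ∀ t, u ∈ D.bag t → (delv D.tree c).Reachable t (τ a0) := by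
      intro a0 u p
      induction p with
      | nil =>
        rename_i u0
        intro hsup t htu
        exact supp_reach (D.bag_conn u0)
          (hbagc u0 (hsup u0 (SimpleGraph.Walk.start_mem_support _))) htu (hτ u0)
      | @cons w w₁ a' hadj q ihq =>
        intro hsup t htu
        obtain ⟨i, hui, hu₁i⟩ := D.bag_edge hadj
        have hw_in : w ∈ X := hsup w (SimpleGraph.Walk.start_mem_support _)
        have h1 : (delv D.tree c).Reachable t i :=
          supp_reach (D.bag_conn w) (hbagc w hw_in) htu hui
        have h2 : (delv D.tree c).Reachable i (τ a') := by
          apply ihq _ i hu₁i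
          intro z hz
          apply hsup
          rw [SimpleGraph.Walk.support_cons]
          exact List.mem_cons_of_mem _ hz
        exact h1.trans h2
    have hsubset : Comp a ⊆ {v ∈ R | τ v ∈ side D.tree c j} := by
      rintro v ⟨p, hp⟩
      refine ⟨(comp_sub a ⟨p, hp⟩).1, ?_⟩
      have h1 : (delv D.tree c).Reachable (τ v) (τ a) := key a v p hp (τ v) (hτ v)
      have h2 : (τ a) ∈ side D.tree c j := by
        apply delv_reach_side hreach
        exact Reachable.refl _
      exact delv_reach_side h1 h2
    have hcount : {v ∈ R | τ v ∈ side D.tree c j}.ncard = wt μ (side D.tree c j) := by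
      rw [hμ, ← filter_card_eq_wt Rfin τ (side D.tree c j)]
      rw [Set.ncard_eq_toFinset_card _ (Set.toFinite _)]
      congr 1
      ext v
      simp only [Set.Finite.mem_toFinset, Set.mem_setOf_eq, Finset.mem_filter, hRfin,
        Set.Finite.mem_toFinset]
    calc 2 * (Comp a).ncard ≤ 2 * {v ∈ R | τ v ∈ side D.tree c j}.ncard := by
          have := Set.ncard_le_ncard hsubset (Set.toFinite _)
          omega
      _ = 2 * wt μ (side D.tree c j) := by rw [hcount]
      _ ≤ ∑ t : ι, μ t := hc j hcj
      _ = R.ncard := hμsum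
  -- the components
  set 𝒞 : Finset (Set V) := (X.toFinite.toFinset).image Comp with h𝒞
  have h𝒞mem : ∀ C ∈ 𝒞, ∃ a ∈ X, C = Comp a := by
    intro C hC
    rw [h𝒞, Finset.mem_image] at hC
    obtain ⟨a, ha, rfl⟩ := hC
    exact ⟨a, X.toFinite.mem_toFinset.mp ha, rfl⟩
  -- recursive covering sets
  have hrec : ∀ C : Set V, ∃ T' : Set (V × V), C ∈ 𝒞 →
      (T'.ncard ≤ 2*(tw+1)*(Δ+1) * C.ncard * (Nat.log 2 C.ncard + 1) ∧
      ∀ a b : V, a ≠ b → ¬ G.Adj a b →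
        (∃ p : G.Walk a b, p.length = G.dist a b ∧ ∀ z ∈ p.support, z ∈ C) →
        ∃ q ∈ T', G.dist q.1 a + G.dist b q.2 + 1 < G.dist q.1 q.2 ∨
                  G.dist q.1 b + G.dist a q.2 + 1 < G.dist q.1 q.2) := by
    intro C
    by_cases hC : C ∈ 𝒞
    · obtain ⟨a, ha, rfl⟩ := h𝒞mem C hC
      have h1 : 1 ≤ (Comp a).ncard := by
        rw [Nat.one_le_iff_ne_zero, ← Nat.pos_iff_ne_zero, Set.ncard_pos (Set.toFinite _)]
        exact ⟨a, comp_self a ha⟩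
      have h2 : 2 * (Comp a).ncard ≤ R.ncard := hbal a ha
      have hlt : (Comp a).ncard < n := by omega
      obtain ⟨T', hT'⟩ := IH (Comp a).ncard hlt (Comp a) le_rfl
      exact ⟨T', fun _ => hT'⟩
    · exact ⟨∅, fun h => absurd h hC⟩
  choose f hf using hrec
  -- the full set
  refine ⟨P0 ∪ ⋃ C ∈ 𝒞, f C, ?_, ?_⟩
  · -- size bound
    have hsum : ∑ C ∈ 𝒞, C.ncard ≤ R.ncard := by
      have hdisj : ∀ C ∈ 𝒞, ∀ C' ∈ 𝒞, C ≠ C' →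
          Disjoint (C.toFinite.toFinset) (C'.toFinite.toFinset) := by
        intro C hC C' hC' hne
        obtain ⟨a, _, rfl⟩ := h𝒞mem C hC
        obtain ⟨a', _, rfl⟩ := h𝒞mem C' hC'
        rw [Finset.disjoint_left]
        intro v hv hv'
        rw [Set.Finite.mem_toFinset] at hv hv'
        exact hne ((comp_eq a v hv).symm.trans (comp_eq a' v hv'))
      calc ∑ C ∈ 𝒞, C.ncard = ∑ C ∈ 𝒞, (C.toFinite.toFinset).card := by
            apply Finset.sum_congr rfl
            intro C _
            exact Set.ncard_eq_toFinset_card C C.toFinite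
        _ = (𝒞.biUnion (fun C => C.toFinite.toFinset)).card := (Finset.card_biUnion hdisj).symm
        _ ≤ Rfin.card := by
            apply Finset.card_le_card
            intro v hv
            rw [Finset.mem_biUnion] at hv
            obtain ⟨C, hC, hvC⟩ := hv
            obtain ⟨a, _, rfl⟩ := h𝒞mem C hC
            rw [Set.Finite.mem_toFinset] at hvC
            rw [hRfin, Set.Finite.mem_toFinset]
            exact (comp_sub a hvC).1
        _ = R.ncard := hRfin_card
    have hlog : ∀ C ∈ 𝒞, Nat.log 2 C.ncard + 1 ≤ Nat.log 2 R.ncard := by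
      intro C hC
      obtain ⟨a, ha, rfl⟩ := h𝒞mem C hC
      have h1 : 1 ≤ (Comp a).ncard := by
        rw [Nat.one_le_iff_ne_zero, ← Nat.pos_iff_ne_zero, Set.ncard_pos (Set.toFinite _)]
        exact ⟨a, comp_self a ha⟩
      have h2 : 2 * (Comp a).ncard ≤ R.ncard := hbal a ha
      have hR2 : 2 ≤ R.ncard := by omega
      have h3 : (Comp a).ncard ≤ R.ncard / 2 := by omega
      have h4 : Nat.log 2 (Comp a).ncard ≤ Nat.log 2 (R.ncard / 2) := Nat.log_mono_right h3
      rw [Nat.log_div_base] at h4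
      have h5 : 0 < Nat.log 2 R.ncard := Nat.log_pos (by norm_num) hR2
      omega
    calc (P0 ∪ ⋃ C ∈ 𝒞, f C).ncard ≤ P0.ncard + (⋃ C ∈ 𝒞, f C).ncard :=
          Set.ncard_union_le _ _
      _ ≤ 2 * K * R.ncard + ∑ C ∈ 𝒞, (f C).ncard :=
          Nat.add_le_add hP0card (ncard_biUnion_le _ _)
      _ ≤ 2 * K * R.ncard + ∑ C ∈ 𝒞, 2 * K * C.ncard * Nat.log 2 R.ncard := by
          apply Nat.add_le_add_left
          apply Finset.sum_le_sum
          intro C hC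
          calc (f C).ncard ≤ 2*(tw+1)*(Δ+1) * C.ncard * (Nat.log 2 C.ncard + 1) :=
                ((hf C) hC).1
            _ ≤ 2 * K * C.ncard * Nat.log 2 R.ncard := by
                rw [hK]
                have := hlog C hC
                have h2 : 2*(tw+1)*(Δ+1) = 2*((tw+1)*(Δ+1)) := by ring
                rw [h2]
                exact Nat.mul_le_mul_left _ this
      _ = 2 * K * R.ncard + 2 * K * Nat.log 2 R.ncard * (∑ C ∈ 𝒞, C.ncard) := by
          rw [Finset.mul_sum]
          congr 1
          apply Finset.sum_congr rfl
          intro C _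
          ring
      _ ≤ 2 * K * R.ncard + 2 * K * Nat.log 2 R.ncard * R.ncard := by
          apply Nat.add_le_add_left
          exact Nat.mul_le_mul_left _ hsum
      _ = 2 * K * R.ncard * (Nat.log 2 R.ncard + 1) := by ring
      _ = 2*(tw+1)*(Δ+1) * R.ncard * (Nat.log 2 R.ncard + 1) := by rw [hK]; ring_nf
  · -- covering
    rintro a b hne hnadj ⟨p, hplen, hpsup⟩
    have haR : a ∈ R := hpsup a p.start_mem_support
    have hbR : b ∈ R := hpsup b p.end_mem_support
    have memNS_S : ∀ {v : V}, v ∈ S → v ∈ NS := by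
      intro v hv
      rw [hNS]
      exact Set.mem_union_left _ hv
    have memNS_adj : ∀ {v s0 : V}, s0 ∈ S → G.Adj s0 v → v ∈ NS := by
      intro v s0 hs0 hadj
      rw [hNS]
      exact Set.mem_union_right _ ⟨s0, hs0, hadj⟩
    have memL : ∀ {u v : V}, u ∈ NS → v ∈ R → (u, v) ∈ P0 ∪ ⋃ C ∈ 𝒞, f C := by
      intro u v hu hv
      apply Set.mem_union_left
      rw [hP0]
      exact Set.mem_union_left _ (Set.mem_prod.mpr ⟨hu, hv⟩)
    have memR : ∀ {u v : V}, u ∈ R → v ∈ NS → (u, v) ∈ P0 ∪ ⋃ C ∈ 𝒞, f C := by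
      intro u v hu hv
      apply Set.mem_union_left
      rw [hP0]
      exact Set.mem_union_right _ (Set.mem_prod.mpr ⟨hu, hv⟩)
    set L := p.length with hL
    have hd2 : 2 ≤ L := by
      by_contra hlt
      push_neg at hlt
      have : L = 0 ∨ L = 1 := by omega
      rcases this with h0 | h0
      · apply hne
        have hv := p.getVert_of_length_le (i := 0) (by omega)
        rwa [p.getVert_zero] at hv
      · apply hnadj
        have hv := p.adj_getVert_succ (i := 0) (by omega)
        have h1 := p.getVert_of_length_le (i := 1) (by omega)
        rwa [p.getVert_zero, h1] at hv
    by_cases hsep : ∃ s ∈ p.support, s ∈ S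
    · obtain ⟨s, hs_sup, hsS⟩ := hsep
      obtain ⟨k, hk_eq, hk_le⟩ := SimpleGraph.Walk.mem_support_iff_exists_getVert.mp hs_sup
      have geo := geodesic_getVert hG p hplen (k := k) hk_le
      rw [hk_eq] at geo
      by_cases h1 : k + 2 ≤ L - k
      · refine ⟨(s, b), memL (memNS_S hsS) hbR, Or.inl ?_⟩
        show G.dist s a + G.dist b b + 1 < G.dist s b
        rw [SimpleGraph.dist_comm (u := s) (v := a), geo.1, SimpleGraph.dist_self, geo.2]
        omega
      by_cases h2 : (L - k) + 2 ≤ k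
      · refine ⟨(a, s), memR haR (memNS_S hsS), Or.inl ?_⟩
        show G.dist a a + G.dist b s + 1 < G.dist a s
        rw [SimpleGraph.dist_self, SimpleGraph.dist_comm (u := b) (v := s), geo.2, geo.1]
        omega
      -- middle cases
      have hk1 : 1 ≤ k := by omega
      have hkL : k + 1 ≤ L := by omega
      by_cases h3 : k ≤ L - k
      · -- use predecessor
        set s' := p.getVert (k-1) with hs'
        have geo' := geodesic_getVert hG p hplen (k := k-1) (by omega)
        have hadj : G.Adj s' s := by
          have := p.adj_getVert_succ (i := k-1) (by omega)
          rw [show k - 1 + 1 = k by omega, hk_eq] at this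
          exact this
        refine ⟨(s', b), memL (memNS_adj hsS hadj.symm) hbR, Or.inl ?_⟩
        show G.dist s' a + G.dist b b + 1 < G.dist s' b
        rw [SimpleGraph.dist_comm (u := s') (v := a), geo'.1, SimpleGraph.dist_self, geo'.2]
        omega
      · -- use successor
        set s'' := p.getVert (k+1) with hs''
        have geo'' := geodesic_getVert hG p hplen (k := k+1) (by omega)
        have hadj : G.Adj s s'' := by
          have := p.adj_getVert_succ (i := k) (by omega)
          rw [hk_eq] at this
          exact this
        refine ⟨(a, s''), memR haR (memNS_adj hsS hadj), Or.inl ?_⟩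
        show G.dist a a + G.dist b s'' + 1 < G.dist a s''
        rw [SimpleGraph.dist_self, SimpleGraph.dist_comm (u := b) (v := s''), geo''.2, geo''.1]
        omega
    · -- recurse into a component
      push_neg at hsep
      have hsupX : ∀ z ∈ p.support, z ∈ X := fun z hz => ⟨hpsup z hz, hsep z hz⟩
      have haX : a ∈ X := hsupX a p.start_mem_support
      have hCmem : Comp a ∈ 𝒞 := by
        rw [h𝒞, Finset.mem_image]
        exact ⟨a, X.toFinite.mem_toFinset.mpr haX, rfl⟩
      have hsupC : ∀ z ∈ p.support, z ∈ Comp a := by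
        intro z hz
        refine ⟨(p.takeUntil z hz).reverse, ?_⟩
        intro y hy
        rw [SimpleGraph.Walk.support_reverse, List.mem_reverse] at hy
        exact hsupX y (p.support_takeUntil_subset hz hy)
      obtain ⟨q, hq, hcov⟩ := ((hf (Comp a)) hCmem).2 a b hne hnadj ⟨p, hplen, hsupC⟩
      refine ⟨q, Set.mem_union_right _ ?_, hcov⟩
      exact Set.mem_biUnion hCmem hq

end Main

end Stmt6Aux

theorem stmt_6 :
    ∃ c : ℝ, 0 < c ∧
      ∀ (V : Type) [Fintype V] (G : SimpleGraph V) [DecidableRel G.Adj] (Δ tw : ℕ),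
        G.Connected → 2 ≤ Fintype.card V → G.maxDegree = Δ → treewidth G = tw →
        ∃ T : Set (V × V),
          (T.ncard : ℝ) ≤ c * Δ * (Δ + tw * Real.log (Fintype.card V)) *
              Fintype.card V * Real.log (Fintype.card V) ∧
          ∀ a b : V, a ≠ b → ¬ G.Adj a b →
            ∃ p ∈ T,
              G.dist p.1 a + G.dist b p.2 + 1 < G.dist p.1 p.2 ∨
              G.dist p.1 b + G.dist a p.2 + 1 < G.dist p.1 p.2 := by
  classical
  refine ⟨512, by norm_num, ?_⟩
  intro V _ G _ Δ tw hconn hcard hmax htw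
  -- a trivial tree decomposition, for nonemptiness of the treewidth set
  have hne : {k | HasTreewidthAtMost G k}.Nonempty := by
    refine ⟨Fintype.card V - 1, Unit, inferInstance,
      { tree := (⊥ : SimpleGraph Unit)
        isTree := ⟨{ preconnected := fun u v => by rw [Subsingleton.elim u v],
                     nonempty := ⟨()⟩ }, ?_⟩
        bag := fun _ => Set.univ
        bag_conn := fun v => { preconnected := fun x y => by rw [Subsingleton.elim x y],
                               nonempty := ⟨⟨(), Set.mem_univ v⟩⟩ }
        bag_edge := fun u v _ => ⟨(), Set.mem_univ u, Set.mem_univ v⟩ }, ?_⟩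
    · intro v w hw
      cases w with
      | nil => exact hw.ne_nil rfl
      | cons h _ => simp at h
    · intro i
      rw [Set.ncard_univ, Nat.card_eq_fintype_card]
      omega
  have hmem : HasTreewidthAtMost G (treewidth G) := Nat.sInf_mem hne
  rw [htw] at hmem
  obtain ⟨ι, hι, D, hbags⟩ := hmem
  -- a choice of a bag for every vertex
  set τ : V → ι := fun v => ((D.bag_conn v).nonempty.some).1 with hτdef
  have hτ : ∀ v, v ∈ D.bag (τ v) := fun v => ((D.bag_conn v).nonempty.some).2
  -- Δ ≥ 1 and tw ≥ 1
  obtain ⟨v, w, hvw⟩ := Fintype.exists_pair_of_one_lt_card (α := V) (by omega)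
  obtain ⟨pw⟩ := hconn v w
  have hlen : pw.length ≠ 0 := by
    intro h0
    apply hvw
    have hgv := pw.getVert_of_length_le (i := 0) (le_of_eq h0)
    rwa [pw.getVert_zero] at hgv
  have hadj0 : G.Adj v (pw.getVert 1) := by
    have h := pw.adj_getVert_succ (i := 0) (by omega)
    rwa [pw.getVert_zero] at h
  have hΔ1 : 1 ≤ Δ := by
    have hdeg : 0 < G.degree v := by
      rw [G.degree_pos_iff_exists_adj]
      exact ⟨_, hadj0⟩
    have := G.degree_le_maxDegree v
    omega
  have htw1 : 1 ≤ tw := by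
    obtain ⟨i, hvi, hwi⟩ := D.bag_edge hadj0
    have h2c : 1 < (D.bag i).ncard := by
      rw [Set.one_lt_ncard_iff (Set.toFinite _)]
      exact ⟨v, pw.getVert 1, hvi, hwi, hadj0.ne⟩
    have := hbags i
    omega
  -- apply the recursive construction on the whole vertex set
  have huniv : (Set.univ : Set V).ncard = Fintype.card V := by
    rw [Set.ncard_univ, Nat.card_eq_fintype_card]
  obtain ⟨Tset, hsize, hcov⟩ := Stmt6Aux.rec_cover hconn D tw Δ hbags hmax τ hτ
    (Fintype.card V) Set.univ (le_of_eq huniv)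
  rw [huniv] at hsize
  refine ⟨Tset, ?_, ?_⟩
  · -- arithmetic
    set n := Fintype.card V with hn
    set L := Real.log n with hLdef
    have h2n : (2:ℝ) ≤ (n:ℝ) := by exact_mod_cast hcard
    have hL2 : Real.log 2 ≤ L := by
      rw [hLdef]
      exact Real.log_le_log (by norm_num) h2n
    have hlog2 : (0.6931471803 : ℝ) < Real.log 2 := Real.log_two_gt_d9
    have hlogn : ((Nat.log 2 n : ℕ) : ℝ) ≤ 2 * L := by
      have hpow : (2:ℕ)^(Nat.log 2 n) ≤ n := Nat.pow_log_le_self 2 (by omega)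
      have hpowR : (2:ℝ)^(Nat.log 2 n) ≤ (n:ℝ) := by exact_mod_cast hpow
      have hlog := Real.log_le_log (by positivity) hpowR
      rw [Real.log_pow] at hlog
      have hk0 : (0:ℝ) ≤ ((Nat.log 2 n : ℕ) : ℝ) := by positivity
      nlinarith
    have hlog4 : ((Nat.log 2 n : ℕ) : ℝ) + 1 ≤ 4 * L := by nlinarith
    have htwR : (1:ℝ) ≤ (tw:ℝ) := by exact_mod_cast htw1
    have hΔR : (1:ℝ) ≤ (Δ:ℝ) := by exact_mod_cast hΔ1
    have hL0 : (0:ℝ) ≤ L := by nlinarith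
    calc (Tset.ncard : ℝ)
        ≤ ((2*(tw+1)*(Δ+1) * n * (Nat.log 2 n + 1) : ℕ) : ℝ) := by exact_mod_cast hsize
      _ = 2*((tw:ℝ)+1)*((Δ:ℝ)+1)*(n:ℝ)*(((Nat.log 2 n : ℕ):ℝ)+1) := by push_cast; ring
      _ ≤ 2*(2*(tw:ℝ))*(2*(Δ:ℝ))*(n:ℝ)*(4*L) := by
          gcongr <;> nlinarith
      _ = (32*(tw:ℝ)) * ((Δ:ℝ)*(n:ℝ)*L) := by ring
      _ ≤ (512*((Δ:ℝ) + (tw:ℝ)*L)) * ((Δ:ℝ)*(n:ℝ)*L) := by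
          apply mul_le_mul_of_nonneg_right
          · nlinarith
          · positivity
      _ = 512 * (Δ:ℝ) * ((Δ:ℝ) + (tw:ℝ) * L) * (n:ℝ) * L := by ring
  · intro a b hab hnadj
    obtain ⟨p, hp⟩ := hconn.exists_walk_length_eq_dist a b
    exact hcov a b hab hnadj ⟨p, hp, fun z _ => Set.mem_univ z⟩
end

section
/- Let G be a finite chordal simple graph on n vertices with maximum degree Δ. Then the treewidth of G is at most Δ, and there exists a set S ⊆ V that is a clique of G, has size at most Δ + 1, and is a (1/2)-balanced separator of G (every connected component of the subgraph induced on V ∖ S has at most n/2 vertices). -/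
open SimpleGraph

set_option linter.unusedSectionVars false
set_option linter.unusedVariables false
set_option maxHeartbeats 1000000

/-- A graph is chordal if every cycle of length greater than 3 has a chord. -/
def IsChordal {V : Type u} (G : SimpleGraph V) : Prop :=
  ∀ ⦃v : V⦄ (w : G.Walk v v), w.IsCycle → 3 < w.length →
    ∃ x y : V, x ∈ w.support ∧ y ∈ w.support ∧ G.Adj x y ∧ s(x, y) ∉ w.edges

lemma clique_ncard_le {V : Type u} [Fintype V] (G : SimpleGraph V) [DecidableRel G.Adj]
    {S : Set V} (h : G.IsClique S) : S.ncard ≤ G.maxDegree + 1 := by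
  rcases S.eq_empty_or_nonempty with rfl | ⟨v, hv⟩
  · simp
  · have hsub : S ⊆ insert v (G.neighborSet v) := by
      intro u hu
      rcases eq_or_ne u v with rfl | hne
      · exact Set.mem_insert _ _
      · exact Set.mem_insert_of_mem _ ((h hv hu hne.symm) : G.Adj v u)
    calc S.ncard ≤ (insert v (G.neighborSet v)).ncard :=
          Set.ncard_le_ncard hsub (Set.toFinite _)
      _ ≤ (G.neighborSet v).ncard + 1 := Set.ncard_insert_le _ _
      _ ≤ G.maxDegree + 1 := by
          have : (G.neighborSet v).ncard = G.degree v := by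
            rw [← card_neighborSet_eq_degree, Set.ncard_eq_toFinset_card']
            simp
          rw [this]
          exact Nat.add_le_add_right (G.degree_le_maxDegree v) 1

section Helpers
variable {V : Type u} [DecidableEq V] {G : SimpleGraph V}

lemma chordal_induce {G : SimpleGraph V} (h : IsChordal G) (s : Set V) :
    IsChordal (G.induce s) := by
  intro v w hw hlen
  obtain ⟨x, y, hx, hy, hadj, hne⟩ := h (w.map (Embedding.induce s (G := G)).toHom)
    (hw.map (Embedding.induce s (G := G)).injective) (hlen.trans_eq (Walk.length_map _ _).symm)
  rw [Walk.support_map] at hx hy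
  obtain ⟨x', hx', rfl⟩ := List.mem_map.1 hx
  obtain ⟨y', hy', rfl⟩ := List.mem_map.1 hy
  refine ⟨x', y', hx', hy', ?_, fun hc => hne ?_⟩
  · exact hadj
  · rw [Walk.edges_map]
    simpa using List.mem_map_of_mem (f := Sym2.map (Embedding.induce s (G := G)).toHom) hc

lemma induce_reachable_transfer {s t : Set V} :
    ∀ {x y : ↥s} (p : (G.induce s).Walk x y), (∀ z ∈ p.support, ↑z ∈ t) →
    ∀ (hx : ↑x ∈ t) (hy : ↑y ∈ t), (G.induce t).Reachable ⟨x, hx⟩ ⟨y, hy⟩ := by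
  intro x y p
  induction p with
  | nil => intro _ hx hy; exact Reachable.refl _
  | @cons x' w' y' h p ih =>
      intro hsup hx hy
      have hw : ↑w' ∈ t := hsup w' (by simp [Walk.support_cons])
      have h1 : (G.induce t).Adj ⟨↑x', hx⟩ ⟨↑w', hw⟩ := h
      exact (h1.reachable).trans (ih (fun z hz => hsup z (by simp [Walk.support_cons, hz])) hw hy)

lemma edge_mem_of_length_one {x y : V} (w : G.Walk x y) (h : w.length = 1) :
    s(x, y) ∈ w.edges := by
  cases w with
  | nil => simp at h
  | cons h' p =>
      cases p with
      | nil => simp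
      | cons h'' p' => simp [Walk.length_cons] at h

lemma support_takeUntil_prefix {x y u : V} (p : G.Walk x y) (hu : u ∈ p.support) :
    (p.takeUntil u hu).support <+: p.support := by
  conv_rhs => rw [← p.take_spec hu]
  rw [Walk.support_append]
  exact ⟨_, rfl⟩

lemma takeUntil_support_reverse_head {x y u : V} (p : G.Walk x y) (hu : u ∈ p.support) :
    ∃ l, (p.takeUntil u hu).support.reverse = u :: l := by
  have := (p.takeUntil u hu).support_reverse
  rw [Walk.support_eq_cons] at this
  exact ⟨_, by rw [← this]⟩

lemma not_mem_takeUntil_both {x y u v : V} (p : G.Walk x y) (hu : u ∈ p.support)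
    (hv : v ∈ p.support) (hne : u ≠ v)
    (hpre : (p.takeUntil u hu).support <+: (p.takeUntil v hv).support)
    (hvm : v ∈ (p.takeUntil u hu).support) : False := by
  obtain ⟨r, hr⟩ := hpre
  obtain ⟨lu, hlu⟩ := takeUntil_support_reverse_head p hu
  obtain ⟨lv, hlv⟩ := takeUntil_support_reverse_head p hv
  have hcount : (p.takeUntil v hv).support.count v = 1 := p.count_support_takeUntil_eq_one hv
  have hrev : (p.takeUntil v hv).support.reverse
      = r.reverse ++ (p.takeUntil u hu).support.reverse := by
    rw [← hr, List.reverse_append]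
  cases hrc : r.reverse with
  | nil =>
      rw [hrc, List.nil_append, hlu, hlv] at hrev
      exact hne (by injection hrev.symm)
  | cons a as =>
      rw [hrc, hlv, hlu] at hrev
      have hva : v = a := by injection hrev
      have hvr : v ∈ r := by
        rw [← List.mem_reverse, hrc, hva]; exact List.mem_cons_self
      have h2 : 2 ≤ (p.takeUntil v hv).support.count v := by
        rw [← hr, List.count_append]
        have c1 : 1 ≤ (p.takeUntil u hu).support.count v := List.one_le_count_iff.2 hvm
        have c2 : 1 ≤ r.count v := List.one_le_count_iff.2 hvr
        omega
      omega

lemma mem_dropUntil_or {x y u v : V} (p : G.Walk x y) (hu : u ∈ p.support)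
    (hv : v ∈ p.support) (hne : u ≠ v) :
    v ∈ (p.dropUntil u hu).support ∨ u ∈ (p.dropUntil v hv).support := by
  by_contra hcon
  push_neg at hcon
  obtain ⟨h1, h2⟩ := hcon
  have hv' : v ∈ (p.takeUntil u hu).support := by
    have := p.take_spec hu
    have hmem := hv
    conv at hmem => rw [← this]
    rw [Walk.mem_support_append_iff] at hmem
    exact hmem.resolve_right h1
  have hu' : u ∈ (p.takeUntil v hv).support := by
    have := p.take_spec hv
    have hmem := hu
    conv at hmem => rw [← this]
    rw [Walk.mem_support_append_iff] at hmem
    exact hmem.resolve_right h2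
  rcases List.prefix_or_prefix_of_prefix (support_takeUntil_prefix p hu)
    (support_takeUntil_prefix p hv) with hp | hp
  · exact not_mem_takeUntil_both p hu hv hne hp hv'
  · exact not_mem_takeUntil_both p hv hu hne.symm hp hu'

lemma shortcut_aux {x y u v : V} (p : G.Walk x y) (hu : u ∈ p.support)
    (huv : G.Adj u v) (hv2 : v ∈ (p.dropUntil u hu).support) (he : s(u, v) ∉ p.edges) :
    ∃ p' : G.Walk x y, p'.length < p.length ∧ ∀ z ∈ p'.support, z ∈ p.support := by
  set w1 := p.takeUntil u hu with hw1
  set w2 := p.dropUntil u hu with hw2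
  set w3 := w2.dropUntil v hv2 with hw3
  set t := (w2.takeUntil v hv2) with ht
  have hlen2 : t.length + w3.length = w2.length := by
    rw [← Walk.length_append, w2.take_spec hv2]
  have hlenp : w1.length + w2.length = p.length := by
    rw [← Walk.length_append, p.take_spec hu]
  have ht2 : 2 ≤ t.length := by
    rcases Nat.lt_or_ge t.length 2 with h | h
    · interval_cases h' : t.length
      · exact absurd (Walk.eq_of_length_eq_zero h') huv.ne
      · exact absurd (Walk.edges_dropUntil_subset p hu (Walk.edges_takeUntil_subset w2 hv2
          (edge_mem_of_length_one t h'))) he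
    · exact h
  refine ⟨w1.append (Walk.cons huv w3), ?_, ?_⟩
  · rw [Walk.length_append, Walk.length_cons]
    omega
  · intro z hz
    rw [Walk.mem_support_append_iff] at hz
    rcases hz with hz | hz
    · exact Walk.support_takeUntil_subset p hu hz
    · rw [Walk.support_cons] at hz
      rcases List.mem_cons.1 hz with rfl | hz
      · exact hu
      · exact Walk.support_dropUntil_subset p hu (Walk.support_dropUntil_subset w2 hv2 hz)

lemma shortcut {x y u v : V} (p : G.Walk x y) (hu : u ∈ p.support)
    (hv : v ∈ p.support) (huv : G.Adj u v) (he : s(u, v) ∉ p.edges) :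
    ∃ p' : G.Walk x y, p'.length < p.length ∧ ∀ z ∈ p'.support, z ∈ p.support := by
  rcases mem_dropUntil_or p hu hv huv.ne with h | h
  · exact shortcut_aux p hu huv h he
  · exact shortcut_aux p hv huv.symm h (by rwa [Sym2.eq_swap])

lemma sep_min_neighbor [Fintype V] {S : Set V} {a b : V}
    (ha : a ∈ Sᶜ) (hb : b ∈ Sᶜ)
    (hsep : ¬(G.induce Sᶜ).Reachable ⟨a, ha⟩ ⟨b, hb⟩)
    (hmin : ∀ S' : Set V, a ∉ S' → b ∉ S' →
      (∀ (ha' : a ∈ S'ᶜ) (hb' : b ∈ S'ᶜ), ¬(G.induce S'ᶜ).Reachable ⟨a, ha'⟩ ⟨b, hb'⟩) →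
      S.ncard ≤ S'.ncard)
    {x : V} (hx : x ∈ S) :
    ∃ u : ↥Sᶜ, u ∈ ((G.induce Sᶜ).connectedComponentMk ⟨a, ha⟩).supp ∧ G.Adj x ↑u := by
  by_contra hno
  push_neg at hno
  have hxa : x ≠ a := fun h => ha (h ▸ hx)
  have ha' : a ∉ S \ {x} := fun h => ha h.1
  have hb' : b ∉ S \ {x} := fun h => hb h.1
  have hsmaller : (S \ {x}).ncard < S.ncard :=
    Set.ncard_diff_singleton_lt_of_mem hx (Set.toFinite S)
  have hsep' : ∀ (ha2 : a ∈ (S \ {x})ᶜ) (hb2 : b ∈ (S \ {x})ᶜ),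
      ¬(G.induce (S \ {x})ᶜ).Reachable ⟨a, ha2⟩ ⟨b, hb2⟩ := by
    intro ha2 hb2 hr
    obtain ⟨p⟩ := hr
    have hxmem : x ∈ (S \ {x})ᶜ := fun h => h.2 rfl
    by_cases hxs : (⟨x, hxmem⟩ : ↥(S \ {x})ᶜ) ∈ p.support
    · set px := p.takeUntil ⟨x, hxmem⟩ hxs with hpx
      have hne : (⟨x, hxmem⟩ : ↥(S \ {x})ᶜ) ≠ ⟨a, ha2⟩ := by
        simp [Subtype.ext_iff, hxa]
      obtain ⟨y0, hadj, q, hq⟩ := Walk.exists_eq_cons_of_ne hne px.reverse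
      have hcount : px.support.count ⟨x, hxmem⟩ = 1 :=
        by convert p.count_support_takeUntil_eq_one hxs using 2; exact lawful_beq_subsingleton _ _
      have hxq : (⟨x, hxmem⟩ : ↥(S \ {x})ᶜ) ∉ q.support := by
        intro hmem
        have h1 : px.reverse.support.count ⟨x, hxmem⟩ = 1 := by
          rw [Walk.support_reverse, List.count_reverse]; exact hcount
        rw [hq, Walk.support_cons, List.count_cons_self] at h1
        have := List.one_le_count_iff.2 hmem
        omega
      have hqS : ∀ z ∈ q.support, ↑z ∈ Sᶜ := by
        intro z hz
        have hz2 : (z : V) ∈ (S \ {x})ᶜ := z.2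
        intro hzS
        have hzx : (z : V) ≠ x := by
          intro h
          exact hxq (by rwa [show z = ⟨x, hxmem⟩ from Subtype.ext h] at hz)
        exact hz2 ⟨hzS, hzx⟩
      have hy0S : (↑y0 : V) ∈ Sᶜ := hqS y0 (Walk.start_mem_support q)
      have hreach : (G.induce Sᶜ).Reachable ⟨↑y0, hy0S⟩ ⟨a, ha⟩ :=
        induce_reachable_transfer q hqS hy0S ha
      have hsupp : (⟨↑y0, hy0S⟩ : ↥Sᶜ) ∈ ((G.induce Sᶜ).connectedComponentMk ⟨a, ha⟩).supp := by
        rw [ConnectedComponent.mem_supp_iff, ConnectedComponent.eq]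
        exact hreach
      exact hno _ hsupp hadj
    · have hpS : ∀ z ∈ p.support, ↑z ∈ Sᶜ := by
        intro z hz
        have hz2 : (z : V) ∈ (S \ {x})ᶜ := z.2
        intro hzS
        have hzx : (z : V) ≠ x := by
          intro h
          exact hxs (by rwa [show z = ⟨x, hxmem⟩ from Subtype.ext h] at hz)
        exact hz2 ⟨hzS, hzx⟩
      exact hsep (induce_reachable_transfer p hpS ha hb)
  exact absurd (hmin _ ha' hb' hsep') (by omega)

end Helpers

lemma chordal_pair : ∀ (n : ℕ) {V : Type u} [DecidableEq V] [Fintype V] (G : SimpleGraph V),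
    Fintype.card V = n → IsChordal G →
    (∀ u w : V, u ≠ w → G.Adj u w) ∨
    ∃ x y : V, x ≠ y ∧ ¬G.Adj x y ∧
      G.IsClique (G.neighborSet x) ∧ G.IsClique (G.neighborSet y) := by
  intro n
  induction n using Nat.strong_induction_on with
  | _ n IH =>
    intro V _ _ G hcard hch
    by_cases hcomp : ∀ u w : V, u ≠ w → G.Adj u w
    · exact Or.inl hcomp
    right
    push_neg at hcomp
    obtain ⟨a, b, hab_ne, hab⟩ := hcomp
    -- separators
    set Sep : Set V → Prop := fun S => a ∉ S ∧ b ∉ S ∧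
      ∀ (ha : a ∈ Sᶜ) (hb : b ∈ Sᶜ), ¬(G.induce Sᶜ).Reachable ⟨a, ha⟩ ⟨b, hb⟩ with hSepDef
    have hsep0 : Sep ({a, b}ᶜ) := by
      refine ⟨by simp, by simp, ?_⟩
      intro ha' hb' hr
      obtain ⟨p⟩ := hr
      cases p with
      | nil => exact hab_ne rfl
      | @cons _ w _ h q =>
          have hw2 : (w : V) = a ∨ (w : V) = b := by
            have := w.2
            simpa using this
          have hadj : G.Adj a ↑w := h
          rcases hw2 with h1 | h1
          · rw [h1] at hadj; exact G.irrefl hadj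
          · rw [h1] at hadj; exact hab hadj

    have hMne : {m | ∃ S, Sep S ∧ S.ncard = m}.Nonempty := ⟨_, _, hsep0, rfl⟩
    obtain ⟨S, hS, hSN⟩ := Nat.sInf_mem hMne
    have hmin : ∀ S', Sep S' → S.ncard ≤ S'.ncard := by
      intro S' h
      rw [hSN]
      exact Nat.sInf_le ⟨S', h, rfl⟩
    obtain ⟨haS, hbS, hsepS⟩ := hS
    have ha : a ∈ Sᶜ := haS
    have hb : b ∈ Sᶜ := hbS
    set GS := G.induce Sᶜ with hGS
    set A := GS.connectedComponentMk ⟨a, ha⟩ with hA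
    set B := GS.connectedComponentMk ⟨b, hb⟩ with hB
    have hAB : A ≠ B := fun h => hsepS ha hb (ConnectedComponent.eq.1 h)
    have hminA : ∀ S' : Set V, a ∉ S' → b ∉ S' →
        (∀ (ha' : a ∈ S'ᶜ) (hb' : b ∈ S'ᶜ),
          ¬(G.induce S'ᶜ).Reachable ⟨a, ha'⟩ ⟨b, hb'⟩) → S.ncard ≤ S'.ncard :=
      fun S' h1 h2 h3 => hmin S' ⟨h1, h2, h3⟩
    have hminB : ∀ S' : Set V, b ∉ S' → a ∉ S' →
        (∀ (hb' : b ∈ S'ᶜ) (ha' : a ∈ S'ᶜ),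
          ¬(G.induce S'ᶜ).Reachable ⟨b, hb'⟩ ⟨a, ha'⟩) → S.ncard ≤ S'.ncard :=
      fun S' h1 h2 h3 => hmin S' ⟨h2, h1, fun ha' hb' hr => h3 hb' ha' hr.symm⟩
    have K1A : ∀ x ∈ S, ∃ u : ↥Sᶜ, u ∈ A.supp ∧ G.Adj x ↑u :=
      fun x hx => sep_min_neighbor ha hb (hsepS ha hb) hminA hx
    have K1B : ∀ x ∈ S, ∃ u : ↥Sᶜ, u ∈ B.supp ∧ G.Adj x ↑u :=
      fun x hx => sep_min_neighbor hb ha (fun hr => hsepS ha hb hr.symm) hminB hx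
    set AC : Set V := Subtype.val '' A.supp with hACdef
    set BC : Set V := Subtype.val '' B.supp with hBCdef
    have hdisj : ∀ z : V, z ∈ AC → z ∈ BC → False := by
      rintro z ⟨z1, hz1, rfl⟩ ⟨z2, hz2, hz12⟩
      have hz : z1 = z2 := Subtype.ext hz12.symm
      rw [ConnectedComponent.mem_supp_iff] at hz1 hz2
      exact hAB (by rw [← hz1, ← hz2, hz])
    have hcross : ∀ z1 z2, z1 ∈ AC → z2 ∈ BC → G.Adj z1 z2 → False := by
      rintro z1 z2 ⟨w1', hw1', rfl⟩ ⟨w2', hw2', rfl⟩ hadj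
      have hadj' : GS.Adj w1' w2' := hadj
      rw [ConnectedComponent.mem_supp_iff] at hw1' hw2'
      exact hAB (by rw [← hw1', ← hw2']; exact ConnectedComponent.eq.2 hadj'.reachable)
    have comp_walk : ∀ (C : GS.ConnectedComponent) (w1 w2 : ↥Sᶜ), w1 ∈ C.supp → w2 ∈ C.supp →
        ∃ qm : G.Walk ↑w1 ↑w2, ∀ z ∈ qm.support, z ∈ Subtype.val '' C.supp := by
      intro C w1 w2 h1 h2
      rw [ConnectedComponent.mem_supp_iff] at h1 h2
      have hreach : GS.Reachable w1 w2 := ConnectedComponent.eq.1 (h1.trans h2.symm)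
      obtain ⟨q0⟩ := hreach
      refine ⟨q0.map (Embedding.induce Sᶜ (G := G)).toHom, ?_⟩
      intro z hz
      have hz : z ∈ q0.support.map (Embedding.induce Sᶜ (G := G)).toHom := by rwa [← Walk.support_map]
      obtain ⟨z', hz', rfl⟩ := List.mem_map.1 hz
      refine ⟨z', ?_, rfl⟩
      rw [ConnectedComponent.mem_supp_iff]
      have hr2 : GS.Reachable w1 z' := ⟨q0.takeUntil z' hz'⟩
      exact (ConnectedComponent.eq.2 hr2.symm).trans h1
    have minwalk : ∀ (x y : V) (T : Set V) (p0 : G.Walk x y),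
        (∀ z ∈ p0.support, z = x ∨ z = y ∨ z ∈ T) →
        ∃ p : G.Walk x y, p.IsPath ∧ (∀ z ∈ p.support, z = x ∨ z = y ∨ z ∈ T) ∧
          ∀ p' : G.Walk x y, (∀ z ∈ p'.support, z = x ∨ z = y ∨ z ∈ T) →
            p.length ≤ p'.length := by
      intro x y T p0 h0
      have hMne2 : {m | ∃ p : G.Walk x y,
          (∀ z ∈ p.support, z = x ∨ z = y ∨ z ∈ T) ∧ p.length = m}.Nonempty := ⟨_, p0, h0, rfl⟩
      obtain ⟨pb, hok, hlen⟩ := Nat.sInf_mem hMne2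
      refine ⟨pb.bypass, Walk.bypass_isPath pb,
        fun z hz => hok z (Walk.support_bypass_subset pb hz), ?_⟩
      intro p' hok'
      calc pb.bypass.length ≤ pb.length := Walk.length_bypass_le pb
        _ ≤ p'.length := by rw [hlen]; exact Nat.sInf_le ⟨p', hok', rfl⟩
    have hclique : G.IsClique S := by
      intro x hx y hy hxy
      by_contra hnadj
      obtain ⟨u1, hu1A, hu1adj⟩ := K1A x hx
      obtain ⟨u2, hu2A, hu2adj⟩ := K1A y hy
      obtain ⟨v1, hv1B, hv1adj⟩ := K1B x hx
      obtain ⟨v2, hv2B, hv2adj⟩ := K1B y hy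
      obtain ⟨qa, hqa⟩ := comp_walk A u1 u2 hu1A hu2A
      obtain ⟨qb, hqb⟩ := comp_walk B v1 v2 hv1B hv2B
      have hokA0 : ∀ z ∈ (Walk.cons hu1adj (qa.concat hu2adj.symm)).support,
          z = x ∨ z = y ∨ z ∈ AC := by
        intro z hz
        rw [Walk.support_cons] at hz
        rcases List.mem_cons.1 hz with rfl | hz
        · exact Or.inl rfl
        · rw [Walk.support_concat] at hz
          rcases List.mem_append.1 hz with hz | hz
          · exact Or.inr (Or.inr (hqa z hz))
          · exact Or.inr (Or.inl (List.mem_singleton.1 hz))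
      have hokB0 : ∀ z ∈ (Walk.cons hv1adj (qb.concat hv2adj.symm)).support,
          z = x ∨ z = y ∨ z ∈ BC := by
        intro z hz
        rw [Walk.support_cons] at hz
        rcases List.mem_cons.1 hz with rfl | hz
        · exact Or.inl rfl
        · rw [Walk.support_concat] at hz
          rcases List.mem_append.1 hz with hz | hz
          · exact Or.inr (Or.inr (hqb z hz))
          · exact Or.inr (Or.inl (List.mem_singleton.1 hz))
      obtain ⟨p, hpPath, hpok, hpmin⟩ := minwalk x y AC _ hokA0
      obtain ⟨q, hqPath, hqok, hqmin⟩ := minwalk x y BC _ hokB0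
      have hplen : 2 ≤ p.length := by
        rcases Nat.lt_or_ge p.length 2 with h | h
        · interval_cases h' : p.length
          · exact absurd (Walk.eq_of_length_eq_zero h') hxy
          · exact absurd (p.adj_of_mem_edges (edge_mem_of_length_one p h')) hnadj
        · exact h
      have hqlen : 2 ≤ q.length := by
        rcases Nat.lt_or_ge q.length 2 with h | h
        · interval_cases h' : q.length
          · exact absurd (Walk.eq_of_length_eq_zero h') hxy
          · exact absurd (q.adj_of_mem_edges (edge_mem_of_length_one q h')) hnadj
        · exact h
      set c := p.append q.reverse with hc
      have hclen : c.length = p.length + q.length := by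
        rw [hc, Walk.length_append, Walk.length_reverse]
      have hedgedisj : ∀ e ∈ p.edges, e ∈ q.edges → False := by
        intro e he1 he2
        induction e using Sym2.ind with
        | _ c1 d1 =>
          have hadj := p.adj_of_mem_edges he1
          have hc1p : c1 ∈ p.support := Walk.fst_mem_support_of_mem_edges p he1
          have hd1p : d1 ∈ p.support := Walk.snd_mem_support_of_mem_edges p he1
          have hc1q : c1 ∈ q.support := Walk.fst_mem_support_of_mem_edges q he2
          have hd1q : d1 ∈ q.support := Walk.snd_mem_support_of_mem_edges q he2
          have hc1xy : c1 = x ∨ c1 = y := by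
            rcases hpok c1 hc1p with h | h | h
            · exact Or.inl h
            · exact Or.inr h
            · rcases hqok c1 hc1q with h' | h' | h'
              · exact Or.inl h'
              · exact Or.inr h'
              · exact absurd h' (fun h'' => hdisj c1 h h'')
          have hd1xy : d1 = x ∨ d1 = y := by
            rcases hpok d1 hd1p with h | h | h
            · exact Or.inl h
            · exact Or.inr h
            · rcases hqok d1 hd1q with h' | h' | h'
              · exact Or.inl h'
              · exact Or.inr h'
              · exact absurd h' (fun h'' => hdisj d1 h h'')
          rcases hc1xy with rfl | rfl <;> rcases hd1xy with rfl | rfl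
          · exact G.irrefl hadj
          · exact hnadj hadj
          · exact hnadj hadj.symm
          · exact G.irrefl hadj
      have hcyc : c.IsCycle := by
        refine ⟨⟨⟨?_⟩, ?_⟩, ?_⟩
        · rw [hc, Walk.edges_append]
          refine List.Nodup.append hpPath.isTrail.edges_nodup ?_ ?_
          · rw [Walk.edges_reverse]
            exact List.nodup_reverse.2 hqPath.isTrail.edges_nodup
          · intro e he1 he2
            rw [Walk.edges_reverse, List.mem_reverse] at he2
            exact hedgedisj e he1 he2
        · intro h
          have h0 : c.length = 0 := by rw [h]; rfl
          omega
        · have hsupp_eq : c.support.tail = p.support.tail ++ q.reverse.support.tail := by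
            rw [hc, Walk.support_append, Walk.support_eq_cons p]
            simp [List.cons_append]
          rw [hsupp_eq]
          have hxnp : x ∉ p.support.tail := by
            have := hpPath.support_nodup
            rw [Walk.support_eq_cons p] at this
            exact (List.nodup_cons.1 this).1
          have hynq : y ∉ q.reverse.support.tail := by
            have := hqPath.reverse.support_nodup
            rw [Walk.support_eq_cons q.reverse] at this
            exact (List.nodup_cons.1 this).1
          refine List.Nodup.append ?_ ?_ ?_
          · exact hpPath.support_nodup.sublist (List.tail_sublist _)
          · exact hqPath.reverse.support_nodup.sublist (List.tail_sublist _)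
          · intro z hz1 hz2
            have hzx : z ≠ x := fun h => hxnp (h ▸ hz1)
            have hzy : z ≠ y := fun h => hynq (h ▸ hz2)
            have hzp : z ∈ p.support := List.mem_of_mem_tail hz1
            have hzq : z ∈ q.support := by
              have := List.mem_of_mem_tail hz2
              rwa [Walk.support_reverse, List.mem_reverse] at this
            rcases hpok z hzp with h | h | h
            · exact hzx h
            · exact hzy h
            · rcases hqok z hzq with h' | h' | h'
              · exact hzx h'
              · exact hzy h'
              · exact hdisj z h h'
      have hlen3 : 3 < c.length := by omega
      obtain ⟨cu, cv, hcu, hcv, hcadj, hcedge⟩ := hch c hcyc hlen3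
      have hmemc : ∀ z, z ∈ c.support → z ∈ p.support ∨ z ∈ q.support := by
        intro z hz
        rw [hc, Walk.mem_support_append_iff] at hz
        rcases hz with hz | hz
        · exact Or.inl hz
        · right; rwa [Walk.support_reverse, List.mem_reverse] at hz
      have hpedge : s(cu, cv) ∉ p.edges := fun h =>
        hcedge (by rw [hc, Walk.edges_append]; exact List.mem_append_left _ h)
      have hqedge : s(cu, cv) ∉ q.edges := fun h =>
        hcedge (by
          rw [hc, Walk.edges_append]
          refine List.mem_append_right _ ?_
          rw [Walk.edges_reverse, List.mem_reverse]
          exact h)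
      have hPcase : cu ∈ p.support → cv ∈ p.support → False := by
        intro h1 h2
        obtain ⟨p', hl, hsub⟩ := shortcut p h1 h2 hcadj hpedge
        have := hpmin p' (fun z hz => hpok z (hsub z hz))
        omega
      have hQcase : cu ∈ q.support → cv ∈ q.support → False := by
        intro h1 h2
        obtain ⟨q', hl, hsub⟩ := shortcut q h1 h2 hcadj hqedge
        have := hqmin q' (fun z hz => hqok z (hsub z hz))
        omega
      by_cases h1p : cu ∈ p.support
      · by_cases h2p : cv ∈ p.support
        · exact hPcase h1p h2p
        · have h2q : cv ∈ q.support := (hmemc cv hcv).resolve_left h2p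
          by_cases h1q : cu ∈ q.support
          · exact hQcase h1q h2q
          · have hcuAC : cu ∈ AC := by
              rcases hpok cu h1p with rfl | rfl | h
              · exact absurd (Walk.start_mem_support q) h1q
              · exact absurd (Walk.end_mem_support q) h1q
              · exact h
            have hcvBC : cv ∈ BC := by
              rcases hqok cv h2q with rfl | rfl | h
              · exact absurd (Walk.start_mem_support p) h2p
              · exact absurd (Walk.end_mem_support p) h2p
              · exact h
            exact hcross cu cv hcuAC hcvBC hcadj
      · have h1q : cu ∈ q.support := (hmemc cu hcu).resolve_left h1p
        by_cases h2q : cv ∈ q.support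
        · exact hQcase h1q h2q
        · have h2p : cv ∈ p.support := (hmemc cv hcv).resolve_right h2q
          have hcuBC : cu ∈ BC := by
            rcases hqok cu h1q with rfl | rfl | h
            · exact absurd (Walk.start_mem_support p) h1p
            · exact absurd (Walk.end_mem_support p) h1p
            · exact h
          have hcvAC : cv ∈ AC := by
            rcases hpok cv h2p with rfl | rfl | h
            · exact absurd (Walk.start_mem_support q) h2q
            · exact absurd (Walk.end_mem_support q) h2q
            · exact h
          exact hcross cv cu hcvAC hcuBC hcadj.symm
    have SIDE : ∀ (r o : V) (hr : r ∈ Sᶜ) (ho : o ∈ Sᶜ),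
        ¬GS.Reachable ⟨r, hr⟩ ⟨o, ho⟩ →
        ∃ z : V, z ∈ Subtype.val '' (GS.connectedComponentMk ⟨r, hr⟩).supp ∧
          G.IsClique (G.neighborSet z) := by
      intro r o hr ho hro
      set C := GS.connectedComponentMk ⟨r, hr⟩ with hC
      set CC : Set V := Subtype.val '' C.supp with hCCdef
      set U : Set V := CC ∪ S with hUdef
      haveI : DecidablePred (· ∈ U) := Classical.decPred _
      have hrCC : r ∈ CC := ⟨⟨r, hr⟩, (ConnectedComponent.mem_supp_iff _ _).2 rfl, rfl⟩
      have hoU : o ∉ U := by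
        rintro (hoCC | hoS)
        · obtain ⟨o', ho', hoo⟩ := hoCC
          have ho2 : o' = ⟨o, ho⟩ := Subtype.ext hoo
          rw [ho2, ConnectedComponent.mem_supp_iff, hC, ConnectedComponent.eq] at ho'
          exact hro ho'.symm
        · exact ho hoS
      have hcardU : Fintype.card ↥U < n := by
        rw [← hcard]
        exact Fintype.card_subtype_lt (x := o) hoU
      have hNU : ∀ z, z ∈ CC → ∀ u, G.Adj z u → u ∈ U := by
        intro z hz u hadj
        by_cases huS : u ∈ S
        · exact Or.inr huS
        · left
          obtain ⟨z', hz', rfl⟩ := hz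
          have hadj' : GS.Adj z' ⟨u, huS⟩ := hadj
          refine ⟨⟨u, huS⟩, ?_, rfl⟩
          rw [ConnectedComponent.mem_supp_iff] at hz' ⊢
          rw [← hz']
          exact (ConnectedComponent.eq.2 hadj'.reachable).symm
      have hfin : ∀ (x0 : ↥U), (↑x0 : V) ∈ CC →
          (G.induce U).IsClique ((G.induce U).neighborSet x0) →
          ∃ z : V, z ∈ CC ∧ G.IsClique (G.neighborSet z) := by
        intro x0 hx0 hsimp
        refine ⟨↑x0, hx0, ?_⟩
        intro u hu w hw huw
        have huU : u ∈ U := hNU _ hx0 u hu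
        have hwU : w ∈ U := hNU _ hx0 w hw
        have h1 : (⟨u, huU⟩ : ↥U) ∈ (G.induce U).neighborSet x0 := hu
        have h2 : (⟨w, hwU⟩ : ↥U) ∈ (G.induce U).neighborSet x0 := hw
        have hne' : (⟨u, huU⟩ : ↥U) ≠ ⟨w, hwU⟩ := fun h => huw (congrArg Subtype.val h)
        exact hsimp h1 h2 hne'
      rcases IH _ hcardU (G.induce U) rfl (chordal_induce hch U) with
        hcompU | ⟨x1, x2, hne12, hnadj12, hs1, hs2⟩
      · exact hfin ⟨r, Or.inl hrCC⟩ hrCC (fun u hu w hw huw => hcompU u w huw)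
      · have hnot : (↑x1 : V) ∉ S ∨ (↑x2 : V) ∉ S := by
          by_contra hcon
          push_neg at hcon
          exact hnadj12 (hclique hcon.1 hcon.2 (fun h => hne12 (Subtype.ext h)))
        have hgetCC : ∀ (x0 : ↥U), (↑x0 : V) ∉ S → (↑x0 : V) ∈ CC := by
          intro x0 h
          rcases x0.2 with h1 | h1
          · exact h1
          · exact absurd h1 h
        rcases hnot with h | h
        · exact hfin x1 (hgetCC x1 h) hs1
        · exact hfin x2 (hgetCC x2 h) hs2
    obtain ⟨xA, hxA, hsimpA⟩ := SIDE a b ha hb (hsepS ha hb)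
    obtain ⟨yB, hyB, hsimpB⟩ := SIDE b a hb ha (fun hr => hsepS ha hb hr.symm)
    refine ⟨xA, yB, ?_, ?_, hsimpA, hsimpB⟩
    · intro h
      exact hdisj xA hxA (h ▸ hyB)
    · intro hadj
      exact hcross xA yB hxA hyB hadj

section OptExtend
variable {ι : Type} [DecidableEq ι]

/-- Extend a graph on `ι` to `Option ι` by attaching `none` as a leaf at `i0`. -/
def optExtend (T : SimpleGraph ι) (i0 : ι) : SimpleGraph (Option ι) where
  Adj x y := match x, y with
    | some a, some b => T.Adj a b
    | some a, none => a = i0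
    | none, some b => b = i0
    | none, none => False
  symm := by
    constructor
    rintro (_ | a) (_ | b) h
    · exact h
    · exact h
    · exact h
    · exact h.symm
  loopless := by
    constructor
    rintro (_ | a) h
    · exact h
    · exact T.irrefl h

variable {T : SimpleGraph ι} {i0 : ι}

lemma optExtend_adj_none {z : Option ι} (h : (optExtend T i0).Adj none z) : z = some i0 := by
  cases z with
  | none => exact h.elim
  | some b => exact congrArg some h

def optExtend_some_hom : T →g optExtend T i0 := ⟨some, fun h => h⟩

lemma optExtend_connected (hT : T.Connected) : (optExtend T i0).Connected := by
  have hsome : ∀ z : ι, (optExtend T i0).Reachable (some z) (some i0) := fun z =>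
    (hT.preconnected z i0).map (optExtend_some_hom)
  have hnone : (optExtend T i0).Reachable none (some i0) :=
    (show (optExtend T i0).Adj none (some i0) from rfl).reachable
  constructor
  · rintro (_ | a) (_ | b)
    · exact Reachable.refl _
    · exact hnone.trans (hsome b).symm
    · exact (hsome a).trans hnone.symm
    · exact (hsome a).trans (hsome b).symm

lemma sym2_some_ne {u w a b : ι} (h : s(u, w) ≠ s(a, b)) :
    s((some u : Option ι), some w) ≠ s(some a, some b) := by
  intro hc
  apply h
  rw [Sym2.eq_iff] at hc ⊢
  rcases hc with ⟨h1, h2⟩ | ⟨h1, h2⟩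
  · exact Or.inl ⟨Option.some_injective _ h1, Option.some_injective _ h2⟩
  · exact Or.inr ⟨Option.some_injective _ h1, Option.some_injective _ h2⟩

lemma optExtend_lower_nonone {a b : ι} :
    ∀ {x y : Option ι} (w : ((optExtend T i0).deleteEdges {s(some a, some b)}).Walk x y),
      none ∉ w.support → ∀ {x' y' : ι}, x = some x' → y = some y' →
      (T.deleteEdges {s(a, b)}).Reachable x' y' := by
  intro x y w
  induction w with
  | nil =>
      intro _ x' y' hx hy
      rw [hx] at hy
      rw [Option.some_injective _ hy]
  | @cons u z _ h p ih =>
      intro hn x' y' hx hy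
      subst hx
      have hzn : z ≠ none := by
        intro hz
        apply hn
        rw [Walk.support_cons]
        exact List.mem_cons_of_mem _ (hz ▸ p.start_mem_support)
      obtain ⟨z', rfl⟩ := Option.ne_none_iff_exists'.1 hzn
      have h1 : (optExtend T i0).Adj (some x') (some z') ∧
          s((some x' : Option ι), some z') ∉ ({s(some a, some b)} : Set (Sym2 (Option ι))) :=
        deleteEdges_adj.1 h
      have hTadj : T.Adj x' z' := h1.1
      have hedge : s(x', z') ∉ ({s(a, b)} : Set (Sym2 ι)) := by
        intro hc
        rw [Set.mem_singleton_iff] at hc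
        refine h1.2 ?_
        rw [Set.mem_singleton_iff]
        have := congrArg (Sym2.map some) hc
        simpa using this
      have hstep : (T.deleteEdges {s(a, b)}).Adj x' z' := deleteEdges_adj.2 ⟨hTadj, hedge⟩
      have hn' : none ∉ p.support := fun hc => hn (by rw [Walk.support_cons]; exact List.mem_cons_of_mem _ hc)
      exact hstep.reachable.trans (ih hn' rfl hy)

lemma optExtend_lower {a b : ι}
    (hbr : ¬(T.deleteEdges {s(a, b)}).Reachable a b) :
    ¬((optExtend T i0).deleteEdges {s(some a, some b)}).Reachable (some a) (some b) := by
  have claim : ∀ (m : ℕ) {x y : ι}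
      (w : ((optExtend T i0).deleteEdges {s(some a, some b)}).Walk (some x) (some y)),
      w.length ≤ m → (T.deleteEdges {s(a, b)}).Reachable x y := by
    intro m
    induction m with
    | zero =>
        intro x y w hl
        have := Walk.eq_of_length_eq_zero (Nat.le_zero.1 hl)
        rw [Option.some_injective _ this]
    | succ m ihm =>
        intro x y w hl
        by_cases hn : none ∈ w.support
        · set w1 := w.takeUntil none hn with hw1
          set w2 := w.dropUntil none hn with hw2
          have hxn : (none : Option ι) ≠ some x := by simp
          have hyn : (none : Option ι) ≠ some y := by simp
          obtain ⟨z, hz, q, hq⟩ := Walk.exists_eq_cons_of_ne hxn w1.reverse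
          obtain ⟨z2, hz2, q2, hq2⟩ := Walk.exists_eq_cons_of_ne hyn w2
          have hzz : z = some i0 := optExtend_adj_none (deleteEdges_adj.1 hz).1
          have hzz2 : z2 = some i0 := optExtend_adj_none (deleteEdges_adj.1 hz2).1
          have hlen1 : w1.length = q.length + 1 := by
            have : w1.reverse.length = q.length + 1 := by rw [hq, Walk.length_cons]
            rw [Walk.length_reverse] at this
            exact this
          have hlen2 : w2.length = q2.length + 1 := by rw [hq2, Walk.length_cons]
          have hlenw : w1.length + w2.length = w.length := by
            rw [← Walk.length_append, w.take_spec hn]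
          set W := (q.reverse.copy rfl hzz).append (q2.copy hzz2 rfl) with hW
          have hWlen : W.length ≤ m := by
            rw [hW, Walk.length_append, Walk.length_copy, Walk.length_copy,
              Walk.length_reverse]
            omega
          exact ihm W hWlen
        · exact optExtend_lower_nonone w hn rfl rfl
  intro hr
  obtain ⟨w⟩ := hr
  exact hbr (claim w.length w le_rfl)

lemma optExtend_isTree (hT : T.IsTree) : (optExtend T i0).IsTree := by
  refine ⟨optExtend_connected hT.isConnected, ?_⟩
  rw [isAcyclic_iff_forall_adj_isBridge]
  have hbr_none : (optExtend T i0).IsBridge s(none, some i0) := by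
    refine isBridge_iff.2 ?_
    intro hr
    obtain ⟨w⟩ := hr
    cases w with
    | @cons _ z _ h q =>
        have h2 := deleteEdges_adj.1 h
        have hz : z = some i0 := optExtend_adj_none h2.1
        subst hz
        exact h2.2 rfl
  rintro (_ | a) (_ | b) hadj
  · exact hadj.elim
  · have hb : b = i0 := Option.some_injective _ (optExtend_adj_none (z := some b) hadj)
    subst hb
    exact hbr_none
  · have ha : a = i0 := Option.some_injective _ (optExtend_adj_none (z := some a) hadj.symm)
    subst ha
    rw [Sym2.eq_swap]
    exact hbr_none
  · have hTadj : T.Adj a b := hadj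
    have hbrT := isAcyclic_iff_forall_adj_isBridge.1 hT.IsAcyclic hTadj
    refine isBridge_iff.2 ?_
    exact optExtend_lower (isBridge_iff.1 hbrT)
end OptExtend

section ConnLemmas
variable {ι : Type} [DecidableEq ι] {T : SimpleGraph ι} {i0 : ι}

/-- hom from induced subgraph into induced subgraph of the extension -/
def optInduceHom {s : Set ι} {t : Set (Option ι)} (hst : ∀ i ∈ s, some i ∈ t) :
    T.induce s →g (optExtend T i0).induce t where
  toFun := fun x => ⟨some x.1, hst x.1 x.2⟩
  map_rel' := fun {x y} h => h

lemma optExtend_induce_some_connected {s : Set ι} (h : (T.induce s).Connected) :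
    ((optExtend T i0).induce (some '' s)).Connected := by
  have hst : ∀ i ∈ s, (some i : Option ι) ∈ some '' s := fun i hi => ⟨i, hi, rfl⟩
  rw [connected_iff]
  constructor
  · rintro ⟨x, hx⟩ ⟨y, hy⟩
    obtain ⟨ix, hix, rfl⟩ := hx
    obtain ⟨iy, hiy, rfl⟩ := hy
    exact (h.preconnected ⟨ix, hix⟩ ⟨iy, hiy⟩).map (optInduceHom hst)
  · obtain ⟨⟨i, hi⟩⟩ := h.nonempty
    exact ⟨⟨some i, ⟨i, hi, rfl⟩⟩⟩

lemma optExtend_induce_insert_connected {s : Set ι} (h : (T.induce s).Connected)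
    (hi0 : i0 ∈ s) : ((optExtend T i0).induce (insert none (some '' s))).Connected := by
  have hst : ∀ i ∈ s, (some i : Option ι) ∈ insert none (some '' s) :=
    fun i hi => Set.mem_insert_of_mem _ ⟨i, hi, rfl⟩
  have hkey : ∀ z : ↥(insert none (some '' s)),
      ((optExtend T i0).induce (insert none (some '' s))).Reachable z
        ⟨some i0, hst i0 hi0⟩ := by
    rintro ⟨z, hz⟩
    rcases hz with hz | ⟨iz, hiz, rfl⟩
    · subst hz
      have hadj : ((optExtend T i0).induce (insert none (some '' s))).Adj
          ⟨none, Set.mem_insert _ _⟩ ⟨some i0, hst i0 hi0⟩ := rfl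
      exact hadj.reachable
    · exact (h.preconnected ⟨iz, hiz⟩ ⟨i0, hi0⟩).map (optInduceHom hst)
  rw [connected_iff]
  constructor
  · intro x y
    exact (hkey x).trans (hkey y).symm
  · exact ⟨⟨none, Set.mem_insert _ _⟩⟩

end ConnLemmas

lemma chordal_exists_simplicial {V : Type u} [DecidableEq V] [Fintype V] [Nonempty V]
    (G : SimpleGraph V) (hch : IsChordal G) : ∃ v, G.IsClique (G.neighborSet v) := by
  rcases chordal_pair (Fintype.card V) G rfl hch with h | ⟨x, _, _, _, hx, _⟩
  · obtain ⟨v⟩ := ‹Nonempty V›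
    exact ⟨v, fun u hu w hw hne => h u w hne⟩
  · exact ⟨x, hx⟩

lemma clique_tree_exists : ∀ (n : ℕ) {V : Type u} [DecidableEq V] [Fintype V]
    (G : SimpleGraph V), Fintype.card V = n → IsChordal G →
    ∃ (ι : Type) (_ : Fintype ι) (D : TreeDecomp G ι),
      (∀ i, G.IsClique (D.bag i)) ∧ ∀ K : Set V, G.IsClique K → ∃ i, K ⊆ D.bag i := by
  intro n
  induction n using Nat.strong_induction_on with
  | _ n IH =>
  intro V _ _ G hcard hch
  rcases isEmpty_or_nonempty V with hemp | hne
  · refine ⟨Unit, inferInstance,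
      ⟨⊥, ⟨?_, ?_⟩, fun _ => ∅, fun v => (IsEmpty.elim hemp v), fun u v h => (IsEmpty.elim hemp u)⟩,
      fun i => Set.pairwise_empty _, fun K hK => ⟨(), fun u hu => (IsEmpty.elim hemp u)⟩⟩
    · exact (connected_iff _).2 ⟨fun u v => by rw [Subsingleton.elim u v], ⟨()⟩⟩
    · intro v c hc
      cases c with
      | nil => exact hc.ne_nil rfl
      | cons h q => exact h.elim
  · obtain ⟨v, hv⟩ := chordal_exists_simplicial G hch
    set W : Set V := {v}ᶜ with hWdef
    haveI : DecidablePred (· ∈ W) := Classical.decPred _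
    have hvW : v ∉ W := by simp [hWdef]
    have hcardW : Fintype.card ↥W < n := by
      rw [← hcard]
      exact Fintype.card_subtype_lt (x := v) hvW
    obtain ⟨ι, finι, D, hbags, hcliq⟩ := IH _ hcardW (G.induce W) rfl (chordal_induce hch W)
    haveI : DecidableEq ι := Classical.decEq ι
    set N := G.neighborSet v with hNdef
    have hNW : ∀ u, u ∈ N → u ∈ W := fun u hu => by
      simp only [hWdef, Set.mem_compl_iff, Set.mem_singleton_iff]
      exact (G.ne_of_adj hu).symm
    set K' : Set ↥W := {u | ↑u ∈ N} with hK'def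
    have hK'cl : (G.induce W).IsClique K' := by
      intro u hu w hw hne
      exact hv hu hw (fun h => hne (Subtype.ext h))
    obtain ⟨i0, hi0⟩ := hcliq K' hK'cl
    refine ⟨Option ι, inferInstance,
      ⟨optExtend D.tree i0, optExtend_isTree D.isTree,
       fun x => x.elim (insert v N) (fun i => Subtype.val '' D.bag i), ?_, ?_⟩, ?_, ?_⟩
    · -- bag_conn
      intro u
      by_cases huv : u = v
      · subst huv
        have hset : {x : Option ι |
            u ∈ x.elim (insert u N) (fun i => Subtype.val '' D.bag i)} = {none} := by
          ext x
          cases x with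
          | none => simp
          | some i =>
              simp only [Option.elim, Set.mem_setOf_eq, Set.mem_singleton_iff]
              constructor
              · rintro ⟨u', hu', hval⟩
                exact absurd (hval ▸ u'.2) (by simp [hWdef])
              · intro h
                exact absurd h (by simp)
        rw [hset]
        rw [connected_iff]
        constructor
        · rintro ⟨x, hx⟩ ⟨y, hy⟩
          have hxy : x = y := by
            rw [Set.mem_singleton_iff] at hx hy
            rw [hx, hy]
          subst hxy
          exact Reachable.refl _
        · exact ⟨⟨none, rfl⟩⟩
      · have hu : u ∈ W := by simp [hWdef, huv]
        have hsetsome : ∀ i : ι, (u ∈ Subtype.val '' D.bag i) ↔ ⟨u, hu⟩ ∈ D.bag i := by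
          intro i
          constructor
          · rintro ⟨u', hu', hval⟩
            rwa [show u' = ⟨u, hu⟩ from Subtype.ext hval] at hu'
          · intro h
            exact ⟨⟨u, hu⟩, h, rfl⟩
        by_cases huN : u ∈ N
        · have hset : {x : Option ι |
              u ∈ x.elim (insert v N) (fun i => Subtype.val '' D.bag i)} =
              insert none (some '' {i | (⟨u, hu⟩ : ↥W) ∈ D.bag i}) := by
            ext x
            cases x with
            | none => simp [huN]
            | some i =>
                simp only [Option.elim, Set.mem_setOf_eq, Set.mem_insert_iff]
                rw [hsetsome i]
                constructor
                · intro h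
                  exact Or.inr ⟨i, h, rfl⟩
                · rintro (h | ⟨i', hi', hii⟩)
                  · exact absurd h (by simp)
                  · rwa [← Option.some_injective _ hii]
          rw [hset]
          refine optExtend_induce_insert_connected (D.bag_conn ⟨u, hu⟩) ?_
          exact hi0 (show (⟨u, hu⟩ : ↥W) ∈ K' from huN)
        · have hset : {x : Option ι |
              u ∈ x.elim (insert v N) (fun i => Subtype.val '' D.bag i)} =
              some '' {i | (⟨u, hu⟩ : ↥W) ∈ D.bag i} := by
            ext x
            cases x with
            | none => simp [huN, huv]
            | some i =>
                simp only [Option.elim, Set.mem_setOf_eq]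
                rw [hsetsome i]
                constructor
                · intro h
                  exact ⟨i, h, rfl⟩
                · rintro ⟨i', hi', hii⟩
                  rwa [← Option.some_injective _ hii]
          rw [hset]
          exact optExtend_induce_some_connected (D.bag_conn ⟨u, hu⟩)
    · -- bag_edge
      intro u w hadj
      by_cases huv : u = v
      · subst huv
        exact ⟨none, Set.mem_insert _ _, Set.mem_insert_of_mem _ hadj⟩
      · by_cases hwv : w = v
        · subst hwv
          exact ⟨none, Set.mem_insert_of_mem _ hadj.symm, Set.mem_insert _ _⟩
        · have hu : u ∈ W := by simp [hWdef, huv]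
          have hw : w ∈ W := by simp [hWdef, hwv]
          have : (G.induce W).Adj ⟨u, hu⟩ ⟨w, hw⟩ := hadj
          obtain ⟨i, h1, h2⟩ := D.bag_edge this
          exact ⟨some i, ⟨⟨u, hu⟩, h1, rfl⟩, ⟨⟨w, hw⟩, h2, rfl⟩⟩
    · -- bags are cliques
      rintro (_ | i)
      · exact hv.insert (fun b hb _ => hb)
      · rintro _ ⟨u1, h1, rfl⟩ _ ⟨u2, h2, rfl⟩ hne
        exact hbags i h1 h2 (fun h => hne (congrArg _ h))
    · -- all cliques in bags
      intro K hK
      by_cases hvK : v ∈ K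
      · refine ⟨none, fun u hu => ?_⟩
        by_cases huv : u = v
        · exact huv ▸ Set.mem_insert _ _
        · exact Set.mem_insert_of_mem _ (hK hvK hu (fun h => huv (h.symm)))
      · have hKW : ∀ u ∈ K, u ∈ W := fun u hu => by
          simp only [hWdef, Set.mem_compl_iff, Set.mem_singleton_iff]
          exact fun h => hvK (h ▸ hu)
        have hcl : (G.induce W).IsClique {u : ↥W | ↑u ∈ K} := by
          intro a ha b hb hne
          exact hK ha hb (fun h => hne (Subtype.ext h))
        obtain ⟨i, hi⟩ := hcliq _ hcl
        exact ⟨some i, fun u hu => ⟨⟨u, hKW u hu⟩, hi hu, rfl⟩⟩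

section Balanced
variable {ι : Type} [DecidableEq ι]

/-- the side of the edge (i,j) containing j -/
def tside (T : SimpleGraph ι) (i j : ι) : Set ι :=
  {x | (T.deleteEdges {s(i, j)}).Reachable j x}

variable {T : SimpleGraph ι}

lemma tside_graph_swap (i j : ι) : T.deleteEdges {s(j, i)} = T.deleteEdges {s(i, j)} := by
  rw [Sym2.eq_swap]

lemma mem_tside {i j x : ι} : x ∈ tside T i j ↔ (T.deleteEdges {s(i, j)}).Reachable j x :=
  Iff.rfl

lemma mem_tside' {i j x : ι} : x ∈ tside T j i ↔ (T.deleteEdges {s(i, j)}).Reachable i x := by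
  rw [mem_tside, tside_graph_swap]

lemma walk_avoid_vert {x y i j : ι} (w : T.Walk x y) (hi : i ∉ w.support) :
    (T.deleteEdges {s(i, j)}).Reachable x y := by
  refine ⟨w.toDeleteEdges _ (fun e he hes => ?_)⟩
  rw [Set.mem_singleton_iff] at hes
  subst hes
  exact hi (w.fst_mem_support_of_mem_edges he)

lemma walk_avoid_change {e e' : Sym2 ι} :
    ∀ {x y : ι} (w : (T.deleteEdges {e'}).Walk x y), (∀ f ∈ w.edges, f ≠ e) →
    (T.deleteEdges {e}).Reachable x y := by
  intro x y w
  induction w with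
  | nil => exact fun _ => Reachable.refl _
  | @cons u z _ h p ih =>
      intro hf
      have h1 := deleteEdges_adj.1 h
      have hstep : (T.deleteEdges {e}).Adj u z := deleteEdges_adj.2 ⟨h1.1, by
        rw [Set.mem_singleton_iff]
        exact hf _ (by rw [Walk.edges_cons]; exact List.mem_cons_self)⟩
      exact hstep.reachable.trans (ih (fun f hfm => hf f (by rw [Walk.edges_cons]; exact List.mem_cons_of_mem _ hfm)))

variable (hT : T.IsTree)
include hT

lemma tree_bridge {i j : ι} (hij : T.Adj i j) :
    ¬(T.deleteEdges {s(i, j)}).Reachable i j :=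
  isBridge_iff.1 (isAcyclic_iff_forall_adj_isBridge.1 hT.IsAcyclic hij)

lemma tside_disj {i j : ι} (hij : T.Adj i j) {x : ι}
    (h1 : x ∈ tside T i j) (h2 : x ∈ tside T j i) : False := by
  rw [mem_tside] at h1
  rw [mem_tside'] at h2
  exact tree_bridge hT hij (h2.trans h1.symm)

lemma tside_mono {i j j' : ι} (hij : T.Adj i j) (hij' : T.Adj i j') (hne : j ≠ j') :
    tside T i j' ⊆ tside T j i := by
  intro x hx
  rw [mem_tside] at hx
  obtain ⟨w⟩ := hx
  rw [mem_tside']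
  have hstep : (T.deleteEdges {s(i, j)}).Adj i j' := deleteEdges_adj.2 ⟨hij', by
    rw [Set.mem_singleton_iff, Sym2.eq_iff]
    rintro (⟨-, h2⟩ | ⟨h1, -⟩)
    · exact hne h2.symm
    · exact T.ne_of_adj hij h1⟩
  by_cases hmem : s(i, j) ∈ w.edges
  · exfalso
    have hi : i ∈ w.support := w.fst_mem_support_of_mem_edges hmem
    exact tree_bridge hT hij' (Reachable.symm ⟨w.takeUntil i hi⟩)
  · exact hstep.reachable.trans (walk_avoid_change w (fun f hf hfe => hmem (hfe ▸ hf)))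

lemma tside_cover {i j : ι} (hij : T.Adj i j) (x : ι) :
    x ∈ tside T i j ∨ x ∈ tside T j i := by
  have hstep : ∀ y z : ι, T.Adj y z → (y ∈ tside T i j ∨ y ∈ tside T j i) →
      (z ∈ tside T i j ∨ z ∈ tside T j i) := by
    intro y z hyz hy
    by_cases he : s(y, z) = s(i, j)
    · rw [Sym2.eq_iff] at he
      rcases he with ⟨-, rfl⟩ | ⟨-, rfl⟩
      · exact Or.inl (Reachable.refl _)
      · exact Or.inr (mem_tside'.2 (Reachable.refl _))
    · have hadj : (T.deleteEdges {s(i, j)}).Adj y z := deleteEdges_adj.2 ⟨hyz, by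
        rwa [Set.mem_singleton_iff]⟩
      rcases hy with hy | hy
      · exact Or.inl (Reachable.trans (mem_tside.1 hy) hadj.reachable)
      · exact Or.inr (mem_tside'.2 (Reachable.trans (mem_tside'.1 hy) hadj.reachable))
  have hwalk : ∀ (y z : ι) (w : T.Walk y z),
      (y ∈ tside T i j ∨ y ∈ tside T j i) → (z ∈ tside T i j ∨ z ∈ tside T j i) := by
    intro y z w
    induction w with
    | nil => exact id
    | cons h p ih => exact fun hy => ih (hstep _ _ h hy)
  obtain ⟨w⟩ := hT.isConnected.preconnected i x
  exact hwalk i x w (Or.inr (mem_tside'.2 (Reachable.refl _)))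

end Balanced

lemma balanced_bag {V : Type u} [Fintype V] {ι : Type} [DecidableEq ι] [Fintype ι]
    {G : SimpleGraph V} (D : TreeDecomp G ι) :
    ∃ i : ι, ∀ c : (G.induce (D.bag i)ᶜ).ConnectedComponent,
      2 * c.supp.ncard ≤ Fintype.card V := by
  classical
  set T := D.tree with hT
  set n := Fintype.card V with hn
  have hTree := D.isTree
  -- supports
  have hsupnonempty : ∀ v : V, ∃ x, v ∈ D.bag x := by
    intro v
    obtain ⟨⟨x, hx⟩⟩ := (D.bag_conn v).nonempty
    exact ⟨x, hx⟩
  have hsupreach : ∀ (v : V) (x1 x2 : ι), v ∈ D.bag x1 → v ∈ D.bag x2 →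
      ∀ i j : ι, v ∉ D.bag i → (T.deleteEdges {s(i, j)}).Reachable x1 x2 := by
    intro v x1 x2 hx1 hx2 i j hvi
    obtain ⟨w0⟩ := (D.bag_conn v).preconnected ⟨x1, hx1⟩ ⟨x2, hx2⟩
    set wm := w0.map (Embedding.induce {i | v ∈ D.bag i} (G := T)).toHom with hwm
    have hi : i ∉ wm.support := by
      intro hi
      rw [hwm, Walk.support_map] at hi
      obtain ⟨z, hz, hzi⟩ := List.mem_map.1 hi
      exact hvi (hzi ▸ z.2)
    exact walk_avoid_vert wm hi
  -- big sides
  set bigSide : ι → ι → Set V :=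
    fun i j => {v : V | v ∉ D.bag i ∧ ∀ x, v ∈ D.bag x → x ∈ tside T i j} with hbigdef
  have claimA : ∀ (i : ι) (v : V), v ∉ D.bag i →
      ∃ j, T.Adj i j ∧ ∀ x, v ∈ D.bag x → x ∈ tside T i j := by
    intro i v hvi
    obtain ⟨x0, hx0⟩ := hsupnonempty v
    have hx0i : x0 ≠ i := fun h => hvi (h ▸ hx0)
    obtain ⟨w⟩ := hTree.isConnected.preconnected x0 i
    have hiw : i ∈ w.support := w.end_mem_support
    set w1 := w.takeUntil i hiw with hw1
    obtain ⟨j0, hadj, q, hq⟩ := Walk.exists_eq_cons_of_ne hx0i.symm w1.reverse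
    have hcount : w1.support.count i = 1 := w.count_support_takeUntil_eq_one hiw
    have hiq : i ∉ q.support := by
      intro hmem
      have h1 : w1.reverse.support.count i = 1 := by
        rw [Walk.support_reverse, List.count_reverse]; exact hcount
      rw [hq, Walk.support_cons, List.count_cons_self] at h1
      have := List.one_le_count_iff.2 hmem
      omega
    refine ⟨j0, hadj, ?_⟩
    have hx0side : x0 ∈ tside T i j0 := walk_avoid_vert q hiq
    intro x hx
    exact Reachable.trans (mem_tside.1 hx0side) (hsupreach v x0 x hx0 hx i j0 hvi)
  have claimSide : ∀ (i j j' x : ι), T.Adj i j → T.Adj i j' →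
      x ∈ tside T i j → x ∈ tside T i j' → j = j' := by
    intro i j j' x hij hij' h1 h2
    by_contra hne
    exact tside_disj hTree hij h1 (tside_mono hTree hij hij' hne h2)
  have hcomp : ∀ (i : ι) (c : (G.induce (D.bag i)ᶜ).ConnectedComponent)
      (v0 : ↥(D.bag i)ᶜ), v0 ∈ c.supp →
      ∃ j, T.Adj i j ∧ ∀ v : ↥(D.bag i)ᶜ, v ∈ c.supp → (↑v : V) ∈ bigSide i j := by
    intro i c v0 hv0
    obtain ⟨j, hij, hj⟩ := claimA i ↑v0 v0.2
    refine ⟨j, hij, ?_⟩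
    have hstep : ∀ (u1 u2 : ↥(D.bag i)ᶜ), (G.induce (D.bag i)ᶜ).Adj u1 u2 →
        (∀ x, (↑u1 : V) ∈ D.bag x → x ∈ tside T i j) →
        (∀ x, (↑u2 : V) ∈ D.bag x → x ∈ tside T i j) := by
      intro u1 u2 hadj h1
      obtain ⟨j2, hij2, hj2⟩ := claimA i ↑u2 u2.2
      have hGadj : G.Adj ↑u1 ↑u2 := hadj
      obtain ⟨xst, hxa, hxb⟩ := D.bag_edge hGadj
      have : j = j2 := claimSide i j j2 xst hij hij2 (h1 xst hxa) (hj2 xst hxb)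
      rw [this]
      exact hj2
    have hwalk : ∀ (u1 u2 : ↥(D.bag i)ᶜ) (w : (G.induce (D.bag i)ᶜ).Walk u1 u2),
        (∀ x, (↑u1 : V) ∈ D.bag x → x ∈ tside T i j) →
        (∀ x, (↑u2 : V) ∈ D.bag x → x ∈ tside T i j) := by
      intro u1 u2 w
      induction w with
      | nil => exact id
      | cons h p ih => exact fun h1 => ih (hstep _ _ h h1)
    intro v hv
    rw [ConnectedComponent.mem_supp_iff] at hv0 hv
    have hreach : (G.induce (D.bag i)ᶜ).Reachable v0 v :=
      ConnectedComponent.eq.1 (hv0.trans hv.symm)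
    obtain ⟨w⟩ := hreach
    exact ⟨v.2, hwalk v0 v w hj⟩
  have hflip : ∀ i j : ι, T.Adj i j → Disjoint (bigSide i j) (bigSide j i) := by
    intro i j hij
    rw [Set.disjoint_left]
    intro v h1 h2
    obtain ⟨x, hx⟩ := hsupnonempty v
    exact tside_disj hTree hij (h1.2 x hx) (h2.2 x hx)
  have hsum : ∀ i j : ι, T.Adj i j → (bigSide i j).ncard + (bigSide j i).ncard ≤ n := by
    intro i j hij
    rw [← Set.ncard_union_eq (hflip i j hij) (Set.toFinite _) (Set.toFinite _)]
    calc ((bigSide i j) ∪ (bigSide j i)).ncard ≤ (Set.univ : Set V).ncard :=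
          Set.ncard_le_ncard (Set.subset_univ _) (Set.toFinite _)
      _ = n := by rw [Set.ncard_univ, Nat.card_eq_fintype_card]
  by_contra hbad
  push_neg at hbad
  have hP : ∀ i : ι, ∃ j, T.Adj i j ∧ n < 2 * (bigSide i j).ncard := by
    intro i
    obtain ⟨c, hc⟩ := hbad i
    have hcne : c.supp.Nonempty := by
      rw [Set.nonempty_iff_ne_empty]
      intro h
      rw [h, Set.ncard_empty] at hc
      omega
    obtain ⟨v0, hv0⟩ := hcne
    obtain ⟨j, hij, hj⟩ := hcomp i c v0 hv0
    refine ⟨j, hij, ?_⟩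
    have himg : Subtype.val '' c.supp ⊆ bigSide i j := by
      rintro _ ⟨v, hv, rfl⟩
      exact hj v hv
    have hcard1 : c.supp.ncard = (Subtype.val '' c.supp).ncard :=
      (Set.ncard_image_of_injective _ Subtype.val_injective).symm
    have hcard2 : (Subtype.val '' c.supp).ncard ≤ (bigSide i j).ncard :=
      Set.ncard_le_ncard himg (Set.toFinite _)
    omega
  haveI : Nonempty ι := hTree.isConnected.nonempty
  have hMne : {m | ∃ i j : ι, T.Adj i j ∧ n < 2 * (bigSide i j).ncard ∧
      (tside T i j).ncard = m}.Nonempty := by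
    obtain ⟨j, hij, hbig⟩ := hP (Classical.arbitrary ι)
    exact ⟨_, _, _, hij, hbig, rfl⟩
  obtain ⟨i, j, hij, hbig, hm⟩ := Nat.sInf_mem hMne
  obtain ⟨k, hjk, hbigk⟩ := hP j
  have hki : k ≠ i := by
    intro h
    rw [h] at hbigk
    have h1 := hsum i j hij
    omega
  have hsub : tside T j k ⊆ tside T i j :=
    tside_mono hTree hij.symm hjk hki.symm
  have hjin : j ∈ tside T i j := Reachable.refl _
  have hjnot : j ∉ tside T j k := by
    intro hmem
    exact tree_bridge hTree hjk (Reachable.symm (mem_tside.1 hmem))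
  have hlt : (tside T j k).ncard < (tside T i j).ncard := by
    refine Set.ncard_lt_ncard ?_ (Set.toFinite _)
    exact (Set.ssubset_iff_of_subset hsub).2 ⟨j, hjin, hjnot⟩
  have hmem2 : (tside T j k).ncard ∈ {m | ∃ i j : ι, T.Adj i j ∧
      n < 2 * (bigSide i j).ncard ∧ (tside T i j).ncard = m} := ⟨j, k, hjk, hbigk, rfl⟩
  have hmin := Nat.sInf_le hmem2
  rw [← hm] at hmin
  omega

theorem stmt_10 {V : Type u} [Fintype V] (G : SimpleGraph V) [DecidableRel G.Adj]
    (Δ : ℕ) (hΔ : G.maxDegree = Δ) (hchordal : IsChordal G) :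
    treewidth G ≤ Δ ∧
    ∃ S : Set V, G.IsClique S ∧ S.ncard ≤ Δ + 1 ∧
      ∀ c : (G.induce Sᶜ).ConnectedComponent, 2 * c.supp.ncard ≤ Fintype.card V := by
  haveI : DecidableEq V := Classical.decEq V
  obtain ⟨ι, finι, D, hbags, hcliq⟩ := clique_tree_exists (Fintype.card V) G rfl hchordal
  have hbound : ∀ i, (D.bag i).ncard ≤ Δ + 1 := fun i => hΔ ▸ clique_ncard_le G (hbags i)
  constructor
  · exact Nat.sInf_le ⟨ι, finι, D, hbound⟩
  · haveI := finι
    haveI : DecidableEq ι := Classical.decEq ι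
    obtain ⟨i, hi⟩ := balanced_bag D
    exact ⟨D.bag i, hbags i, hbound i, hi⟩
end

section
/- Let G = (V,E) be a finite connected chordal simple graph on n ≥ 1 vertices with maximum degree Δ. Then there exists a vertex v ∈ V such that the number of ordered pairs (a,b) ∈ V × V with δ(a,v) + δ(v,b) = δ(a,b) (i.e., v lies on some shortest path between a and b) is at least n²/(2(Δ+1)). -/
open SimpleGraph

namespace ChordalProofAux

variable {V : Type*} {G : SimpleGraph V}

lemma edge_mem_of_length_one {x y : V} (p : G.Walk x y) (h : p.length = 1) :
    s(x, y) ∈ p.edges := by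
  cases p with
  | nil => simp at h
  | cons hadj q =>
    have hq : q.length = 0 := by simpa using h
    have := SimpleGraph.Walk.eq_of_length_eq_zero hq
    subst this
    simp

lemma penult_mem_support {x y : V} (p : G.Walk x y) :
    p.getVert (p.length - 1) ∈ p.support := by
  rw [SimpleGraph.Walk.mem_support_iff_exists_getVert]
  exact ⟨p.length - 1, rfl, Nat.sub_le _ _⟩

lemma adj_penult {x y : V} (p : G.Walk x y) (h : 1 ≤ p.length) :
    G.Adj (p.getVert (p.length - 1)) y := by
  have h1 : p.length - 1 < p.length := by omega
  have := p.adj_getVert_succ h1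
  rwa [Nat.sub_add_cancel h, p.getVert_length] at this




lemma minwalk_chordless [DecidableEq V] {u v : V} {T : Set V}
    (w : G.Walk u v) (hw : ∀ z ∈ w.support, z ∈ T)
    (hmin : ∀ w' : G.Walk u v, (∀ z ∈ w'.support, z ∈ T) → w.length ≤ w'.length) :
    w.IsPath ∧ ∀ ⦃x y⦄, x ∈ w.support → y ∈ w.support → G.Adj x y → s(x, y) ∈ w.edges := by
  constructor
  · have hb : w.bypass = w := by
      apply w.bypass_eq_self_of_length_le
      exact hmin w.bypass (fun z hz => hw z (w.support_bypass_subset hz))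
    rw [← hb]; exact w.bypass_isPath
  · intro x y hx hy hadj
    by_cases hy' : y ∈ (w.dropUntil x hx).support
    · -- splice : takeUntil x ++ (x~y) ++ dropUntil of dropUntil
      set d := w.dropUntil x hx with hd
      set d2 := d.dropUntil y hy' with hd2
      have hspec : (w.takeUntil x hx).append d = w := w.take_spec hx
      have hspec2 : (d.takeUntil y hy').append d2 = d := d.take_spec hy'
      set w' : G.Walk u v := (w.takeUntil x hx).append (SimpleGraph.Walk.cons hadj d2) with hw'
      have hsub : ∀ z ∈ w'.support, z ∈ T := by
        intro z hz
        rw [hw', SimpleGraph.Walk.mem_support_append_iff] at hz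
        rcases hz with hz | hz
        · exact hw z (w.support_takeUntil_subset hx hz)
        · rw [SimpleGraph.Walk.support_cons] at hz
          rcases List.mem_cons.mp hz with hz' | hz
          · rw [hz']; exact hw x hx
          · exact hw z (w.support_dropUntil_subset hx (d.support_dropUntil_subset hy' hz))
      have hlen := hmin w' hsub
      have l1 : (w.takeUntil x hx).length + d.length = w.length := by
        conv_rhs => rw [← hspec]
        rw [SimpleGraph.Walk.length_append]
      have l2 : (d.takeUntil y hy').length + d2.length = d.length := by
        conv_rhs => rw [← hspec2]
        rw [SimpleGraph.Walk.length_append]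
      have l3 : w'.length = (w.takeUntil x hx).length + (1 + d2.length) := by
        rw [hw', SimpleGraph.Walk.length_append, SimpleGraph.Walk.length_cons]
        omega
      have htk : (d.takeUntil y hy').length ≤ 1 := by omega
      interval_cases h : (d.takeUntil y hy').length
      · exact absurd (SimpleGraph.Walk.eq_of_length_eq_zero h) hadj.ne
      · have := edge_mem_of_length_one _ h
        exact w.edges_dropUntil_subset hx (d.edges_takeUntil_subset hy' this)
    · -- y is in the takeUntil part
      have hy2 : y ∈ (w.takeUntil x hx).support := by
        have := hy
        conv at this => rw [← w.take_spec hx]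
        rw [SimpleGraph.Walk.mem_support_append_iff] at this
        tauto
      set q := w.takeUntil x hx with hq
      set d := w.dropUntil x hx with hd
      set q2 := q.dropUntil y hy2 with hq2
      have hspec2 : (q.takeUntil y hy2).append q2 = q := q.take_spec hy2
      set w' : G.Walk u v := (q.takeUntil y hy2).append (SimpleGraph.Walk.cons hadj.symm d) with hw'
      have hsub : ∀ z ∈ w'.support, z ∈ T := by
        intro z hz
        rw [hw', SimpleGraph.Walk.mem_support_append_iff] at hz
        rcases hz with hz | hz
        · exact hw z (w.support_takeUntil_subset hx (q.support_takeUntil_subset hy2 hz))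
        · rw [SimpleGraph.Walk.support_cons] at hz
          rcases List.mem_cons.mp hz with hz' | hz
          · rw [hz']; exact hw y hy
          · exact hw z (w.support_dropUntil_subset hx hz)
      have hlen := hmin w' hsub
      have l1 : q.length + d.length = w.length := by
        conv_rhs => rw [← w.take_spec hx]
        rw [SimpleGraph.Walk.length_append]
      have l2 : (q.takeUntil y hy2).length + q2.length = q.length := by
        conv_rhs => rw [← hspec2]
        rw [SimpleGraph.Walk.length_append]
      have l3 : w'.length = (q.takeUntil y hy2).length + (1 + d.length) := by
        rw [hw', SimpleGraph.Walk.length_append, SimpleGraph.Walk.length_cons]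
        omega
      have htk : q2.length ≤ 1 := by omega
      interval_cases h : q2.length
      · exact absurd (SimpleGraph.Walk.eq_of_length_eq_zero h).symm hadj.ne
      · have := edge_mem_of_length_one _ h
        rw [Sym2.eq_swap]
        exact w.edges_takeUntil_subset hx (q.edges_dropUntil_subset hy2 this)


lemma apex_adj_penult [DecidableEq V] (hch : IsChordal G) :
    ∀ (n : ℕ) {a b t : V} (p : G.Walk a b), p.length ≤ n → p.IsPath →
      (∀ ⦃x y⦄, x ∈ p.support → y ∈ p.support → G.Adj x y → s(x, y) ∈ p.edges) →
      G.Adj t a → G.Adj t b → t ∉ p.support →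
      G.Adj t (p.getVert (p.length - 1)) := by
  intro n
  induction n with
  | zero =>
    intro a b t p hlen _ _ hta _ _
    have h0 : p.length = 0 := Nat.le_zero.mp hlen
    rw [h0]
    simpa [SimpleGraph.Walk.getVert_zero] using hta
  | succ n ih =>
    intro a b t p hlen hp hcl hta htb htp
    by_cases hsmall : p.length ≤ 1
    · interval_cases h : p.length <;> simpa [SimpleGraph.Walk.getVert_zero] using hta
    push_neg at hsmall
    have hab : a ≠ b := by
      intro h
      subst h
      rw [SimpleGraph.Walk.isPath_iff_eq_nil] at hp
      subst hp
      simp at hsmall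
    set p' : G.Walk a t := p.concat htb.symm with hp'
    have hp'path : p'.IsPath := by
      rw [SimpleGraph.Walk.isPath_def, hp', SimpleGraph.Walk.support_concat,
        List.nodup_append]
      refine ⟨hp.support_nodup, List.nodup_singleton t, ?_⟩
      exact fun x hx y hy => by rw [List.mem_singleton] at hy; subst hy; exact fun h => htp (h ▸ hx)
    have hcyc : (SimpleGraph.Walk.cons hta p').IsCycle := by
      rw [SimpleGraph.Walk.cons_isCycle_iff]
      refine ⟨hp'path, ?_⟩
      rw [hp', SimpleGraph.Walk.edges_concat]
      intro hmem
      rw [List.concat_eq_append] at hmem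
      rcases List.mem_append.mp hmem with h | h
      · exact htp (SimpleGraph.Walk.fst_mem_support_of_mem_edges p h)
      · rw [List.mem_singleton, Sym2.eq_iff] at h
        rcases h with ⟨h1, h2⟩ | ⟨h1, h2⟩
        · exact hta.ne h2.symm
        · exact hab h2
    have hclen : (SimpleGraph.Walk.cons hta p').length = p.length + 2 := by
      rw [SimpleGraph.Walk.length_cons, hp', SimpleGraph.Walk.length_concat]
    obtain ⟨x, y, hx, hy, hxy, hne⟩ := hch _ hcyc (by omega)
    have hsupmem : ∀ z, z ∈ (SimpleGraph.Walk.cons hta p').support ↔ z = t ∨ z ∈ p.support := by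
      intro z
      rw [SimpleGraph.Walk.support_cons, hp', SimpleGraph.Walk.support_concat]
      simp [List.concat_eq_append]
      tauto
    have hedgemem : ∀ e ∈ p.edges, e ∈ (SimpleGraph.Walk.cons hta p').edges := by
      intro e he
      rw [SimpleGraph.Walk.edges_cons, hp', SimpleGraph.Walk.edges_concat]
      simp [List.concat_eq_append]
      tauto
    have hta_mem : s(t, a) ∈ (SimpleGraph.Walk.cons hta p').edges := by
      rw [SimpleGraph.Walk.edges_cons]
      exact List.mem_cons_self
    have htb_mem : s(t, b) ∈ (SimpleGraph.Walk.cons hta p').edges := by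
      rw [SimpleGraph.Walk.edges_cons, hp', SimpleGraph.Walk.edges_concat]
      simp [List.concat_eq_append, Sym2.eq_swap]
    have key : ∃ c, c ∈ p.support ∧ G.Adj t c ∧ c ≠ a ∧ c ≠ b := by
      rcases (hsupmem x).mp hx with rfl | hxp
      · rcases (hsupmem y).mp hy with rfl | hyp
        · exact absurd rfl hxy.ne
        · refine ⟨y, hyp, hxy, ?_, ?_⟩
          · rintro rfl; exact hne hta_mem
          · rintro rfl; exact hne htb_mem
      · rcases (hsupmem y).mp hy with rfl | hyp
        · refine ⟨x, hxp, hxy.symm, ?_, ?_⟩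
          · rintro rfl; rw [Sym2.eq_swap] at hne; exact hne hta_mem
          · rintro rfl; rw [Sym2.eq_swap] at hne; exact hne htb_mem
        · exact absurd (hedgemem _ (hcl hxp hyp hxy)) hne
    obtain ⟨c, hcp, htc, hca, hcb⟩ := key
    set q := p.dropUntil c hcp with hq
    have hspec := p.take_spec hcp
    have l1 : (p.takeUntil c hcp).length + q.length = p.length := by
      conv_rhs => rw [← hspec]
      rw [SimpleGraph.Walk.length_append]
    have htake_pos : 1 ≤ (p.takeUntil c hcp).length := by
      rcases Nat.eq_zero_or_pos (p.takeUntil c hcp).length with h0 | h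
      · exact absurd (SimpleGraph.Walk.eq_of_length_eq_zero h0).symm hca
      · exact h
    have hq1 : 1 ≤ q.length := by
      rcases Nat.eq_zero_or_pos q.length with h0 | h
      · exact absurd (SimpleGraph.Walk.eq_of_length_eq_zero h0) hcb
      · exact h
    have hqlen : q.length ≤ n := by omega
    have hqpath := hp.dropUntil hcp
    have hqcl : ∀ ⦃x y⦄, x ∈ q.support → y ∈ q.support → G.Adj x y → s(x, y) ∈ q.edges := by
      intro x' y' hx' hy' hxy'
      have hmem := hcl (p.support_dropUntil_subset hcp hx') (p.support_dropUntil_subset hcp hy') hxy'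
      have hedges : p.edges = (p.takeUntil c hcp).edges ++ q.edges := by
        conv_lhs => rw [← hspec]
        rw [SimpleGraph.Walk.edges_append]
      rw [hedges] at hmem
      rcases List.mem_append.mp hmem with h | h
      · exfalso
        have hx1 := SimpleGraph.Walk.fst_mem_support_of_mem_edges _ h
        have hy1 := SimpleGraph.Walk.snd_mem_support_of_mem_edges _ h
        have hnd : p.support.Nodup := hp.support_nodup
        have hsup : p.support = (p.takeUntil c hcp).support ++ q.support.tail := by
          conv_lhs => rw [← hspec]
          rw [SimpleGraph.Walk.support_append]
        rw [hsup, List.nodup_append] at hnd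
        have hqc := SimpleGraph.Walk.support_eq_cons q
        have hxc : x' = c := by
          rcases List.mem_cons.mp (hqc ▸ hx') with h' | h'
          · exact h'
          · exact absurd hx1 (fun hh => hnd.2.2 _ hh _ h' rfl)
        have hyc : y' = c := by
          rcases List.mem_cons.mp (hqc ▸ hy') with h' | h'
          · exact h'
          · exact absurd hy1 (fun hh => hnd.2.2 _ hh _ h' rfl)
        exact hxy'.ne (hxc.trans hyc.symm)
      · exact h
    have ihres := ih q hqlen hqpath hqcl htc htb
      (fun hmem => htp (p.support_dropUntil_subset hcp hmem))
    have hpen : p.getVert (p.length - 1) = q.getVert (q.length - 1) := by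
      have hga := SimpleGraph.Walk.getVert_append (p.takeUntil c hcp) q (p.length - 1)
      rw [hspec] at hga
      rw [hga, if_neg (by omega)]
      congr 1
      omega
    rw [hpen]
    exact ihres


lemma exists_adj_all [DecidableEq V] (hch : IsChordal G)
    {A : Set V} (hA : A.Nonempty)
    (hconn : ∀ x ∈ A, ∀ y ∈ A, ∃ w : G.Walk x y, ∀ z ∈ w.support, z ∈ A) :
    ∀ S : Finset V, (∀ s ∈ S, s ∉ A) → (∀ s ∈ S, ∀ t ∈ S, s ≠ t → G.Adj s t) →
      (∀ s ∈ S, ∃ x ∈ A, G.Adj s x) →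
      ∃ u ∈ A, ∀ s ∈ S, G.Adj u s := by
  intro S
  induction S using Finset.induction with
  | empty => exact fun _ _ _ => ⟨hA.choose, hA.choose_spec, by simp⟩
  | @insert s S' hs ih =>
    intro hSA hclq hnb
    obtain ⟨u', hu'A, hu'adj⟩ := ih (fun t ht => hSA t (Finset.mem_insert_of_mem ht))
      (fun t ht t' ht' => hclq t (Finset.mem_insert_of_mem ht) t' (Finset.mem_insert_of_mem ht'))
      (fun t ht => hnb t (Finset.mem_insert_of_mem ht))
    obtain ⟨x0, hx0A, hsx0⟩ := hnb s (Finset.mem_insert_self s S')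
    obtain ⟨w0, hw0⟩ := hconn u' hu'A x0 hx0A
    set T : Set V := A ∪ {s} with hT
    have hPw1 : ∀ z ∈ (w0.concat hsx0.symm).support, z ∈ T := by
      intro z hz
      rw [SimpleGraph.Walk.support_concat] at hz
      rcases List.mem_append.mp hz with h | h
      · exact Or.inl (hw0 z h)
      · rw [List.mem_singleton] at h
        exact Or.inr h
    classical
    have hex : ∃ nn : ℕ, ∃ w : G.Walk u' s, (∀ z ∈ w.support, z ∈ T) ∧ w.length = nn :=
      ⟨(w0.concat hsx0.symm).length, w0.concat hsx0.symm, hPw1, rfl⟩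
    obtain ⟨w, hwT, hwlen⟩ := Nat.find_spec hex
    have hmin : ∀ w' : G.Walk u' s, (∀ z ∈ w'.support, z ∈ T) → w.length ≤ w'.length := by
      intro w' hw'
      rw [hwlen]
      exact Nat.find_min' hex ⟨w', hw', rfl⟩
    obtain ⟨hwpath, hwcl⟩ := minwalk_chordless w hwT hmin
    have hsA : s ∉ A := hSA s (Finset.mem_insert_self s S')
    have hlen1 : 1 ≤ w.length := by
      rcases Nat.eq_zero_or_pos w.length with h0 | h
      · exact absurd (SimpleGraph.Walk.eq_of_length_eq_zero h0 ▸ hu'A) hsA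
      · exact h
    set u := w.getVert (w.length - 1) with hu
    have hadj_us : G.Adj u s := adj_penult w hlen1
    have huA : u ∈ A := by
      rcases hwT u (penult_mem_support w) with h | h
      · exact h
      · rw [Set.mem_singleton_iff] at h
        exact absurd (h ▸ hadj_us) (G.irrefl)
    refine ⟨u, huA, ?_⟩
    intro t ht
    rcases Finset.mem_insert.mp ht with rfl | ht'
    · exact hadj_us
    · have htA : t ∉ A := hSA t (Finset.mem_insert_of_mem ht')
      have hts : t ≠ s := fun h => hs (h ▸ ht')
      have htsup : t ∉ w.support := by
        intro hmem
        rcases hwT t hmem with h | h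
        · exact htA h
        · exact hts h
      have := apex_adj_penult hch w.length w le_rfl hwpath hwcl (hu'adj t ht').symm
        (hclq t (Finset.mem_insert_of_mem ht') s (Finset.mem_insert_self s S') hts) htsup
      exact this.symm


/-- Reachability avoiding a forbidden finite set `C`. -/
def Reach (G : SimpleGraph V) (C : Finset V) (a b : V) : Prop :=
  ∃ w : G.Walk a b, ∀ z ∈ w.support, z ∉ C

open scoped Classical in
/-- The component of `a` in `G - C`, as a `Finset`. -/
noncomputable def comp (G : SimpleGraph V) [Fintype V] (C : Finset V) (a : V) : Finset V :=
  Finset.univ.filter (Reach G C a)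

variable [Fintype V]

lemma mem_comp {C : Finset V} {a b : V} : b ∈ comp G C a ↔ Reach G C a b := by
  classical
  simp [comp]

lemma self_mem_comp {C : Finset V} {a : V} (ha : a ∉ C) : a ∈ comp G C a :=
  mem_comp.mpr ⟨SimpleGraph.Walk.nil, by simpa using ha⟩

lemma not_mem_C_of_mem_comp {C : Finset V} {a b : V} (h : b ∈ comp G C a) : b ∉ C := by
  obtain ⟨w, hw⟩ := mem_comp.mp h
  exact hw b w.end_mem_support

lemma comp_closure {C : Finset V} {a b y : V} (hb : b ∈ comp G C a) (hadj : G.Adj b y)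
    (hy : y ∉ C) : y ∈ comp G C a := by
  obtain ⟨w, hw⟩ := mem_comp.mp hb
  refine mem_comp.mpr ⟨w.concat hadj, ?_⟩
  intro z hz
  rw [SimpleGraph.Walk.support_concat] at hz
  rcases List.mem_append.mp hz with h | h
  · exact hw z h
  · rw [List.mem_singleton] at h
    exact h ▸ hy

lemma reach_of_mem_support [DecidableEq V] {C : Finset V} {a b z : V} (w : G.Walk a b)
    (hw : ∀ x ∈ w.support, x ∉ C) (hz : z ∈ w.support) : Reach G C a z :=
  ⟨w.takeUntil z hz, fun x hx => hw x (w.support_takeUntil_subset hz hx)⟩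

lemma comp_conn [DecidableEq V] {C : Finset V} {a : V} :
    ∀ x ∈ (comp G C a : Set V), ∀ y ∈ (comp G C a : Set V),
      ∃ w : G.Walk x y, ∀ z ∈ w.support, z ∈ (comp G C a : Set V) := by
  intro x hx y hy
  obtain ⟨wx, hwx⟩ := mem_comp.mp (by simpa using hx)
  obtain ⟨wy, hwy⟩ := mem_comp.mp (by simpa using hy)
  refine ⟨wx.reverse.append wy, ?_⟩
  intro z hz
  rw [SimpleGraph.Walk.mem_support_append_iff] at hz
  simp only [Finset.mem_coe]
  rcases hz with h | h
  · rw [SimpleGraph.Walk.support_reverse, List.mem_reverse] at h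
    exact mem_comp.mpr (reach_of_mem_support wx hwx h)
  · exact mem_comp.mpr (reach_of_mem_support wy hwy h)

/-- Walk-closure principle: a property preserved along edges avoiding `C'` propagates along
walks avoiding `C'`. -/
lemma walk_closed {C' : Finset V} (P : V → Prop)
    (hcl : ∀ ⦃z y⦄, P z → z ∉ C' → G.Adj z y → y ∉ C' → P y) :
    ∀ {x y : V} (w : G.Walk x y), (∀ z ∈ w.support, z ∉ C') → P x → P y := by
  intro x y w
  induction w with
  | nil => exact fun _ h => h
  | cons h q ihw =>
    intro hsup hx
    refine ihw (fun z hz => hsup z (by rw [SimpleGraph.Walk.support_cons]; exact List.mem_cons_of_mem _ hz)) ?_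
    exact hcl hx (hsup _ (by rw [SimpleGraph.Walk.support_cons]; exact List.mem_cons_self)) h
      (hsup _ (by rw [SimpleGraph.Walk.support_cons]; exact List.mem_cons_of_mem _ q.start_mem_support))


lemma exists_balanced_clique [DecidableEq V] (hch : IsChordal G) (hcard : 1 ≤ Fintype.card V) :
    ∃ C : Finset V, C.Nonempty ∧ G.IsClique (C : Set V) ∧
      ∀ a, a ∉ C → 2 * (comp G C a).card ≤ Fintype.card V := by
  classical
  set μ : Finset V → ℕ :=
    fun C => Finset.univ.sup (fun x => if x ∈ C then 0 else (comp G C x).card) with hμ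
  have hSne : ∃ m, ∃ C : Finset V, C.Nonempty ∧ G.IsClique (C : Set V) ∧ μ C = m := by
    obtain ⟨v0⟩ := Fintype.card_pos_iff.mp hcard
    exact ⟨μ {v0}, {v0}, ⟨v0, Finset.mem_singleton_self v0⟩,
      by simpa using SimpleGraph.isClique_singleton (G := G) v0, rfl⟩
  obtain ⟨C, hCne, hCclq, hCμ⟩ := Nat.find_spec hSne
  refine ⟨C, hCne, hCclq, ?_⟩
  by_contra hbad
  push_neg at hbad
  obtain ⟨a, haC, hAbig⟩ := hbad
  set A := comp G C a with hAdef
  have haA : a ∈ A := self_mem_comp haC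
  have hAC : ∀ b ∈ A, b ∉ C := fun b hb => not_mem_C_of_mem_comp hb
  set S : Finset V := C.filter (fun c => ∃ x ∈ A, G.Adj c x) with hS
  have hSsubC : S ⊆ C := Finset.filter_subset _ _
  obtain ⟨u, huA, huadj⟩ := exists_adj_all hch (A := (A : Set V)) ⟨a, by simpa using haA⟩
    comp_conn S
    (fun s hs hsA => hAC s (Finset.mem_coe.mp hsA) (hSsubC hs))
    (fun s hs t ht hst => hCclq (hSsubC hs) (hSsubC ht) hst)
    (fun s hs => by
      obtain ⟨hsC, x, hxA, hadj⟩ := Finset.mem_filter.mp hs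
      exact ⟨x, Finset.mem_coe.mpr hxA, hadj⟩)
  have huA' : u ∈ A := Finset.mem_coe.mp huA
  set C' : Finset V := insert u S with hC'
  have hC'ne : C'.Nonempty := ⟨u, Finset.mem_insert_self u S⟩
  have hC'clq : G.IsClique (C' : Set V) := by
    rw [hC', Finset.coe_insert]
    refine (hCclq.subset (Finset.coe_subset.mpr hSsubC)).insert ?_
    intro b hb _
    exact huadj b (Finset.mem_coe.mp hb)
  have hApos : 0 < A.card := Finset.card_pos.mpr ⟨a, haA⟩
  have hAle : A.card ≤ μ C := by
    rw [hμ]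
    have := Finset.le_sup (f := fun x => if x ∈ C then 0 else (comp G C x).card)
      (Finset.mem_univ a)
    simpa [haC] using this
  have hμC' : μ C' < A.card := by
    rw [hμ]
    rw [Finset.sup_lt_iff hApos]
    intro b _
    by_cases hbC' : b ∈ C'
    · simpa [hbC'] using hApos
    · rw [if_neg hbC']
      have hbu : b ≠ u := fun h => hbC' (h ▸ Finset.mem_insert_self u S)
      by_cases hbA : b ∈ A
      · have hsub : comp G C' b ⊆ A.erase u := by
          intro y hy
          obtain ⟨w, hw⟩ := mem_comp.mp hy
          have hP : y ∈ A ∧ y ≠ u := by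
            refine walk_closed (G := G) (C' := C') (fun z => z ∈ A ∧ z ≠ u) ?_ w hw ⟨hbA, hbu⟩
            intro z y' hz hzC' hadj hy'
            have hy'u : y' ≠ u := fun h => hy' (h ▸ Finset.mem_insert_self u S)
            refine ⟨?_, hy'u⟩
            by_cases hy'C : y' ∈ C
            · exact absurd (Finset.mem_insert_of_mem
                (Finset.mem_filter.mpr ⟨hy'C, ⟨z, hz.1, hadj.symm⟩⟩)) hy'
            · exact comp_closure hz.1 hadj hy'C
          exact Finset.mem_erase.mpr ⟨hP.2, hP.1⟩
        calc (comp G C' b).card ≤ (A.erase u).card := Finset.card_le_card hsub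
          _ < A.card := Finset.card_erase_lt_of_mem huA'
      · have hsub : comp G C' b ⊆ Finset.univ \ A := by
          intro y hy
          obtain ⟨w, hw⟩ := mem_comp.mp hy
          have hP : y ∉ A := by
            refine walk_closed (G := G) (C' := C') (fun z => z ∉ A) ?_ w hw hbA
            intro z y' hz hzC' hadj hy'C' hy'A
            by_cases hzC : z ∈ C
            · exact hzC' (Finset.mem_insert_of_mem
                (Finset.mem_filter.mpr ⟨hzC, ⟨y', hy'A, hadj⟩⟩))
            · exact hz (comp_closure hy'A hadj.symm hzC)
          exact Finset.mem_sdiff.mpr ⟨Finset.mem_univ y, hP⟩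
        calc (comp G C' b).card ≤ (Finset.univ \ A).card := Finset.card_le_card hsub
          _ = Fintype.card V - A.card := by
              rw [Finset.card_sdiff_of_subset (Finset.subset_univ _), Finset.card_univ]
          _ < A.card := by omega
  have hlt : μ C' < μ C := lt_of_lt_of_le hμC' hAle
  have hge : μ C ≤ μ C' := by
    rw [hCμ]
    exact Nat.find_min' hSne ⟨C', hC'ne, hC'clq, rfl⟩
  omega

end ChordalProofAux

theorem stmt_14 {V : Type u} [Fintype V] (G : SimpleGraph V) [DecidableRel G.Adj]
    (hG : G.Connected) (hchordal : IsChordal G) (Δ : ℕ) (hΔ : G.maxDegree = Δ)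
    (hn : 1 ≤ Fintype.card V) :
    ∃ v : V,
      (Fintype.card V : ℝ) ^ 2 / (2 * (Δ + 1)) ≤
        ({p : V × V | G.dist p.1 v + G.dist v p.2 = G.dist p.1 p.2}.ncard : ℝ) := by
  classical
  obtain ⟨C, hCne, hCclq, hbal⟩ := ChordalProofAux.exists_balanced_clique hchordal hn
  set n := Fintype.card V with hn'
  set Good : Finset (V × V) :=
    Finset.univ.filter (fun p => ∃ c ∈ C, G.dist p.1 c + G.dist c p.2 = G.dist p.1 p.2)
    with hGood
  have hbadmem : ∀ p : V × V, p ∉ Good →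
      p.1 ∉ C ∧ p.2 ∈ ChordalProofAux.comp G C p.1 := by
    intro p hp
    have hnp : ∀ c ∈ C, G.dist p.1 c + G.dist c p.2 ≠ G.dist p.1 p.2 := by
      rw [hGood, Finset.mem_filter] at hp
      push_neg at hp
      exact hp (Finset.mem_univ p)
    have h1 : p.1 ∉ C := by
      intro h
      exact hnp p.1 h (by simp [G.dist_self])
    obtain ⟨w, hwlen⟩ := hG.exists_walk_length_eq_dist p.1 p.2
    by_cases havoid : ∀ z ∈ w.support, z ∉ C
    · exact ⟨h1, ChordalProofAux.mem_comp.mpr ⟨w, havoid⟩⟩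
    · exfalso
      push_neg at havoid
      obtain ⟨c, hcsup, hcC⟩ := havoid
      apply hnp c hcC
      have t1 : G.dist p.1 c ≤ (w.takeUntil c hcsup).length := SimpleGraph.dist_le _
      have t2 : G.dist c p.2 ≤ (w.dropUntil c hcsup).length := SimpleGraph.dist_le _
      have t3 : (w.takeUntil c hcsup).length + (w.dropUntil c hcsup).length = w.length := by
        conv_rhs => rw [← w.take_spec hcsup]
        rw [SimpleGraph.Walk.length_append]
      have t4 : G.dist p.1 p.2 ≤ G.dist p.1 c + G.dist c p.2 := hG.dist_triangle
      omega
  -- counting bad pairs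
  have hsubset : Goodᶜ ⊆ (Finset.univ.filter (fun x => x ∉ C)).biUnion
      (fun a => (ChordalProofAux.comp G C a).image (fun b => (a, b))) := by
    intro p hp
    obtain ⟨h1, h2⟩ := hbadmem p (Finset.mem_compl.mp hp)
    refine Finset.mem_biUnion.mpr ⟨p.1, Finset.mem_filter.mpr ⟨Finset.mem_univ _, h1⟩, ?_⟩
    exact Finset.mem_image.mpr ⟨p.2, h2, by simp⟩
  have hb1 : Goodᶜ.card ≤ ∑ a ∈ Finset.univ.filter (fun x => x ∉ C),
      (ChordalProofAux.comp G C a).card :=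
    le_trans (Finset.card_le_card hsubset)
      (le_trans Finset.card_biUnion_le
        (Finset.sum_le_sum (fun a _ => Finset.card_image_le)))
  have hb2 : 2 * (∑ a ∈ Finset.univ.filter (fun x => x ∉ C),
      (ChordalProofAux.comp G C a).card) ≤ n * n := by
    rw [Finset.mul_sum]
    calc ∑ a ∈ Finset.univ.filter (fun x => x ∉ C), 2 * (ChordalProofAux.comp G C a).card
        ≤ ∑ _a ∈ Finset.univ.filter (fun x => x ∉ C), n :=
          Finset.sum_le_sum (fun a ha => hbal a (Finset.mem_filter.mp ha).2)
      _ = (Finset.univ.filter (fun x => x ∉ C)).card * n := by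
          rw [Finset.sum_const, smul_eq_mul]
      _ ≤ n * n := Nat.mul_le_mul_right n
          (le_trans (Finset.card_le_univ _) (le_of_eq Finset.card_univ))
  have hGoodcard : n * n ≤ 2 * Good.card := by
    have hcompl : Goodᶜ.card = Fintype.card (V × V) - Good.card := Finset.card_compl Good
    have hprod : Fintype.card (V × V) = n * n := by rw [Fintype.card_prod, hn']
    have hle : Good.card ≤ Fintype.card (V × V) := le_trans (Finset.card_le_univ _)
      (le_of_eq Finset.card_univ)
    omega
  -- pigeonhole over C
  obtain ⟨v, hvC, hvmax⟩ := Finset.exists_max_image C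
    (fun c => (Finset.univ.filter
      (fun p : V × V => G.dist p.1 c + G.dist c p.2 = G.dist p.1 p.2)).card) hCne
  have hGsub : Good ⊆ C.biUnion (fun c => Finset.univ.filter
      (fun p : V × V => G.dist p.1 c + G.dist c p.2 = G.dist p.1 p.2)) := by
    intro p hp
    rw [hGood, Finset.mem_filter] at hp
    obtain ⟨-, c, hcC, hc⟩ := hp
    exact Finset.mem_biUnion.mpr ⟨c, hcC, Finset.mem_filter.mpr ⟨Finset.mem_univ _, hc⟩⟩
  set fv : ℕ := (Finset.univ.filter
      (fun p : V × V => G.dist p.1 v + G.dist v p.2 = G.dist p.1 p.2)).card with hfv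
  have hG2 : Good.card ≤ C.card * fv := by
    refine le_trans (Finset.card_le_card hGsub) (le_trans Finset.card_biUnion_le ?_)
    refine le_trans (Finset.sum_le_card_nsmul _ _ fv (fun c hc => hvmax c hc)) ?_
    rw [smul_eq_mul]
  have hCcard : C.card ≤ Δ + 1 := by
    have hsub : C ⊆ insert v (G.neighborFinset v) := by
      intro c hc
      by_cases hcv : c = v
      · exact hcv ▸ Finset.mem_insert_self _ _
      · refine Finset.mem_insert_of_mem ((SimpleGraph.mem_neighborFinset G v c).mpr ?_)
        exact hCclq (Finset.mem_coe.mpr hvC) (Finset.mem_coe.mpr hc) (Ne.symm hcv)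
    refine le_trans (Finset.card_le_card hsub) (le_trans (Finset.card_insert_le _ _) ?_)
    have hdeg := G.degree_le_maxDegree v
    rw [hΔ] at hdeg
    have hcnf : (G.neighborFinset v).card = G.degree v :=
      SimpleGraph.card_neighborFinset_eq_degree G v
    omega
  -- final inequality
  refine ⟨v, ?_⟩
  have hset : {p : V × V | G.dist p.1 v + G.dist v p.2 = G.dist p.1 p.2} =
      ↑(Finset.univ.filter
        (fun p : V × V => G.dist p.1 v + G.dist v p.2 = G.dist p.1 p.2)) := by
    ext p
    simp
  rw [hset, Set.ncard_coe_finset, ← hfv]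
  rw [div_le_iff₀ (by positivity)]
  have hnat : n * n ≤ fv * (2 * (Δ + 1)) := by
    have h2 : Good.card ≤ (Δ + 1) * fv := le_trans hG2 (Nat.mul_le_mul_right fv hCcard)
    calc n * n ≤ 2 * Good.card := hGoodcard
      _ ≤ 2 * ((Δ + 1) * fv) := Nat.mul_le_mul_left 2 h2
      _ = fv * (2 * (Δ + 1)) := by ring
  have := (Nat.cast_le (α := ℝ)).mpr hnat
  push_cast at this ⊢
  nlinarith [this]
end

section
/- Let G = (V,E) be a finite connected simple graph, let U ⊆ V be self-contained in G, let S ⊆ U be a clique of G, and let C be a connected component of the subgraph of G induced on U ∖ S. Then the set C ∪ S is self-contained in G. -/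
open SimpleGraph

/-- `U` is self-contained in `G`: every shortest path in `G` between vertices of `U`
stays inside `U`. -/
def SelfContained {V : Type*} (G : SimpleGraph V) (U : Set V) : Prop :=
  ∀ x ∈ U, ∀ y ∈ U, ∀ z : V, G.dist x z + G.dist z y = G.dist x y → z ∈ U

/-- Every vertex on a shortest walk splits the distance. -/
lemma support_dist_eq {V : Type*} {G : SimpleGraph V} (hG : G.Connected) {a b : V}
    (p : G.Walk a b) (hp : p.length = G.dist a b) {w : V} (hw : w ∈ p.support) :
    G.dist a w + G.dist w b = G.dist a b := by
  classical
  have hsplit := congrArg SimpleGraph.Walk.length (p.take_spec hw)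
  rw [SimpleGraph.Walk.length_append] at hsplit
  have h1 : G.dist a w ≤ (p.takeUntil w hw).length := SimpleGraph.dist_le _
  have h2 : G.dist w b ≤ (p.dropUntil w hw).length := SimpleGraph.dist_le _
  have h3 := hG.dist_triangle (u := a) (v := w) (w := b)
  omega

lemma reach_in_induce {V : Type*} {G : SimpleGraph V} {T : Set V} :
    ∀ {a b : V} (p : G.Walk a b) (h : ∀ w ∈ p.support, w ∈ T),
    (G.induce T).Reachable ⟨a, h a p.start_mem_support⟩ ⟨b, h b p.end_mem_support⟩ := by
  intro a b p
  induction p with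
  | nil => intro h; exact SimpleGraph.Reachable.refl _
  | @cons u v w huv q ih =>
    intro h
    have hq : ∀ x ∈ q.support, x ∈ T := fun x hx => h x (List.mem_cons_of_mem _ hx)
    have hadj : (G.induce T).Adj ⟨u, h u (q.cons huv).start_mem_support⟩
        ⟨v, hq v q.start_mem_support⟩ := by
      simpa using huv
    exact hadj.reachable.trans (ih hq)

theorem stmt_15 {V : Type*} [Fintype V] (G : SimpleGraph V) (hG : G.Connected)
    (U : Set V) (hU : SelfContained G U) (S : Set V) (hSU : S ⊆ U)
    (hclique : G.IsClique S)
    (c : (G.induce (U \ S)).ConnectedComponent) :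
    SelfContained G ((Subtype.val '' c.supp) ∪ S) := by
  intro x hx y hy z hz
  -- memberships in U
  have hCU : ∀ v ∈ (Subtype.val '' c.supp : Set V), v ∈ U \ S := by
    rintro v ⟨⟨v', hv'⟩, _, rfl⟩; exact hv'
  have hxU : x ∈ U := by
    rcases hx with hx | hx
    · exact (hCU x hx).1
    · exact hSU hx
  have hyU : y ∈ U := by
    rcases hy with hy | hy
    · exact (hCU y hy).1
    · exact hSU hy
  have hzU : z ∈ U := hU x hxU y hyU z hz
  by_cases hzS : z ∈ S
  · exact Or.inr hzS
  have hzT : z ∈ U \ S := ⟨hzU, hzS⟩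
  -- cliques have diameter ≤ 1
  have hdistS : ∀ s ∈ S, ∀ t ∈ S, G.dist s t ≤ 1 := by
    intro s hs t ht
    by_cases hst : s = t
    · subst hst; rw [SimpleGraph.dist_self]; omega
    · exact SimpleGraph.dist_le ((hclique hs ht hst).toWalk)
  left
  by_cases hB : ∃ s ∈ S, G.dist x s + G.dist s z = G.dist x z
  · -- then no vertex of S splits z..y; in particular y ∉ S; connect z to y inside U \ S
    obtain ⟨s, hsS, hs⟩ := hB
    have hkey : ∀ w ∈ S, G.dist z w + G.dist w y ≠ G.dist z y := by
      intro w hwS hw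
      have hsw : G.dist s w ≤ 1 := hdistS s hsS w hwS
      have htri : G.dist x y ≤ G.dist x s + (G.dist s w + G.dist w y) :=
        le_trans (hG.dist_triangle (v := s))
          (by gcongr; exact hG.dist_triangle (v := w))
      have hsz : 0 < G.dist s z := hG.pos_dist_of_ne (fun h => hzS (h ▸ hsS))
      have hzw : 0 < G.dist z w := hG.pos_dist_of_ne (fun h => hzS (h ▸ hwS))
      have hszw : G.dist s w ≤ G.dist s z + G.dist z w := hG.dist_triangle
      omega
    have hyS : y ∉ S := fun hyS => hkey y hyS (by simp)
    -- y ∈ image, get its component point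
    rcases hy with hy | hy; swap
    · exact absurd hy hyS
    obtain ⟨y', hy'c, rfl⟩ := hy
    obtain ⟨p, hp⟩ := hG.exists_walk_length_eq_dist z y'.val
    have hpsup : ∀ w ∈ p.support, w ∈ U \ S := by
      intro w hwp
      have hsplit := support_dist_eq hG p hp hwp
      have hwU : w ∈ U := by
        refine hU x hxU y'.val hyU w ?_
        have h1 : G.dist x w ≤ G.dist x z + G.dist z w := hG.dist_triangle
        have h2 : G.dist x y'.val ≤ G.dist x w + G.dist w y'.val := hG.dist_triangle
        omega
      refine ⟨hwU, fun hwS => hkey w hwS hsplit⟩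
    have hre := reach_in_induce p hpsup
    have : (G.induce (U \ S)).connectedComponentMk ⟨z, hzT⟩ =
        (G.induce (U \ S)).connectedComponentMk ⟨y'.val, y'.2⟩ :=
      SimpleGraph.ConnectedComponent.sound hre
    refine ⟨⟨z, hzT⟩, ?_, rfl⟩
    rw [SimpleGraph.ConnectedComponent.mem_supp_iff] at hy'c ⊢
    rw [this, ← hy'c]
  · -- no vertex of S splits x..z; connect z to x inside U \ S
    push_neg at hB
    have hxS : x ∉ S := fun hxS => hB x hxS (by simp)
    rcases hx with hx | hx; swap
    · exact absurd hx hxS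
    obtain ⟨x', hx'c, rfl⟩ := hx
    obtain ⟨p, hp⟩ := hG.exists_walk_length_eq_dist x'.val z
    have hpsup : ∀ w ∈ p.support, w ∈ U \ S := by
      intro w hwp
      have hsplit := support_dist_eq hG p hp hwp
      have hwU : w ∈ U := by
        refine hU x'.val hxU y hyU w ?_
        have h1 : G.dist w y ≤ G.dist w z + G.dist z y := hG.dist_triangle
        have h2 : G.dist x'.val y ≤ G.dist x'.val w + G.dist w y := hG.dist_triangle
        omega
      refine ⟨hwU, fun hwS => hB w hwS hsplit⟩
    have hre := reach_in_induce p hpsup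
    have : (G.induce (U \ S)).connectedComponentMk ⟨x'.val, x'.2⟩ =
        (G.induce (U \ S)).connectedComponentMk ⟨z, hzT⟩ :=
      SimpleGraph.ConnectedComponent.sound hre
    refine ⟨⟨z, hzT⟩, ?_, rfl⟩
    rw [SimpleGraph.ConnectedComponent.mem_supp_iff] at hx'c ⊢
    rw [← this, ← hx'c]
end
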